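/- arXiv:2602.10436 — 7 statements merged into one kernel-verified Lean document; each statement's English description precedes it below -/
import Mathlib

section
/- Suppose sequences (z^k) and (z̃^k) satisfy (A3). Then there exists K ∈ ℕ such that for every k ≥ K the iterate z^k = (x^k, y^k) satisfies: y^k ≥ 0 componentwise, y^k_j = 0 and g_j(x^k) < 0 for every j ∈ N, and y^k_j > 0 for every j ∈ B_a; that is, z^k belongs to the identifiable set M. -/
noncomputable section

open scoped ENNReal
open Classical Filter Topology

/-- The primal-dual space ℝⁿ × ℝᵐ with the Euclidean norm. -/
abbrev Zsp (n m : ℕ) := EuclideanSpace ℝ (Fin n ⊕ Fin m)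

/-- The primal (x-) part of a primal-dual point. -/
def xPart {n m : ℕ} (z : Zsp n m) : Fin n → ℝ := fun i => z (Sum.inl i)

/-- The dual (y-) part of a primal-dual point. -/
def yPart {n m : ℕ} (z : Zsp n m) : Fin m → ℝ := fun j => z (Sum.inr j)

/-- Convex subdifferential of `φ : ℝⁿ → ℝ` at `x`. -/
def subdiff {n : ℕ} (φ : (Fin n → ℝ) → ℝ) (x : Fin n → ℝ) : Set (Fin n → ℝ) :=
  {u | ∀ w, φ x + ∑ i, u i * (w i - x i) ≤ φ w}

/-- Normal cone to the nonnegative orthant ℝᵐ₊ at `y`. -/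
def normalConePos {m : ℕ} (y : Fin m → ℝ) : Set (Fin m → ℝ) :=
  {v | ∀ w : Fin m → ℝ, (∀ j, 0 ≤ w j) → ∑ j, v j * (w j - y j) ≤ 0}

/-- The saddle subdifferential F(z); empty unless the dual part is nonnegative. -/
def saddleF {n m : ℕ} (f : (Fin n → ℝ) → ℝ) (g : Fin m → (Fin n → ℝ) → ℝ)
    (z : Zsp n m) : Set (Zsp n m) :=
  {uv | (∀ j, 0 ≤ yPart z j) ∧
    (∃ a ∈ subdiff f (xPart z), ∃ b : Fin m → Fin n → ℝ,
        (∀ j, b j ∈ subdiff (g j) (xPart z)) ∧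
        ∀ i, xPart uv i = a i + ∑ j, yPart z j * b j i) ∧
    (∃ v ∈ normalConePos (yPart z), ∀ j, yPart uv j = -(g j (xPart z)) + v j)}

/-- The primal-dual solution set S* = {z : 0 ∈ F(z)}. -/
def Sstar {n m : ℕ} (f : (Fin n → ℝ) → ℝ) (g : Fin m → (Fin n → ℝ) → ℝ) :
    Set (Zsp n m) := {z | (0 : Zsp n m) ∈ saddleF f g z}

/-- A primal-dual point regarded as a plain vector indexed by `Fin n ⊕ Fin m`. -/
def toVec {n m : ℕ} (z : Zsp n m) : (Fin n ⊕ Fin m) → ℝ := fun i => z i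

/-- The P-seminorm ‖z‖_P = √(zᵀ P z). -/
def pnorm {n m : ℕ} (P : Matrix (Fin n ⊕ Fin m) (Fin n ⊕ Fin m) ℝ) (z : Zsp n m) : ℝ :=
  Real.sqrt (dotProduct (toVec z) (P.mulVec (toVec z)))

/-- P-distance from a point to a set. -/
def distP {n m : ℕ} (P : Matrix (Fin n ⊕ Fin m) (Fin n ⊕ Fin m) ℝ) (z : Zsp n m)
    (S : Set (Zsp n m)) : ℝ := sInf ((fun w => pnorm P (z - w)) '' S)

/-- ℝ≥0∞-valued Q-seminorm distance from the origin to a set (equal to ⊤ on ∅). -/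
def edistQ {n m : ℕ} (Q : Matrix (Fin n ⊕ Fin m) (Fin n ⊕ Fin m) ℝ)
    (A : Set (Zsp n m)) : ℝ≥0∞ := ⨅ w ∈ A, ENNReal.ofReal (pnorm Q w)

/-- Metric subregularity of the saddle subdifferential near the solution set. -/
def MetricSubregular {n m : ℕ} (f : (Fin n → ℝ) → ℝ)
    (g : Fin m → (Fin n → ℝ) → ℝ) : Prop :=
  ∀ t > (0:ℝ), ∃ α > (0:ℝ), ∀ z : Zsp n m, Metric.infDist z (Sstar f g) ≤ t →
    ENNReal.ofReal (α * Metric.infDist z (Sstar f g)) ≤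
      EMetric.infEdist (0 : Zsp n m) (saddleF f g z)

/-- `l` is the largest eigenvalue of `P`. -/
def IsMaxEigen {ι : Type*} [Fintype ι] (P : Matrix ι ι ℝ) (l : ℝ) : Prop :=
  (∃ v : ι → ℝ, v ≠ 0 ∧ P.mulVec v = l • v) ∧
  ∀ (μ : ℝ) (v : ι → ℝ), v ≠ 0 → P.mulVec v = μ • v → μ ≤ l

/-- The global metric subregularity modulus α_G over the τ-neighborhood of S*. -/
def alphaG {n m : ℕ} (f : (Fin n → ℝ) → ℝ) (g : Fin m → (Fin n → ℝ) → ℝ) (τ : ℝ) : ℝ :=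
  sInf {r : ℝ | ∃ z : Zsp n m, Metric.infDist z (Sstar f g) ≤ τ ∧
    0 < Metric.infDist z (Sstar f g) ∧ (saddleF f g z).Nonempty ∧
    r = Metric.infDist (0 : Zsp n m) (saddleF f g z) / Metric.infDist z (Sstar f g)}

/-- Theorem: asymptotic identification of the active set under (A3). -/
theorem stmt1
    (n m : ℕ) (hn : 0 < n) (hm : 0 < m)
    (f : (Fin n → ℝ) → ℝ) (g : Fin m → (Fin n → ℝ) → ℝ)
    (hf : ConvexOn ℝ Set.univ f) (hg : ∀ j, ConvexOn ℝ Set.univ (g j))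
    (hS : (Sstar f g).Nonempty)
    (P : Matrix (Fin n ⊕ Fin m) (Fin n ⊕ Fin m) ℝ) (hP : P.PosDef)
    (z zt : ℕ → Zsp n m) (zstar : Zsp n m)
    -- (A3)(i): convergence to a solution z* in the P-norm
    (hzstar : zstar ∈ Sstar f g)
    (hconv : Tendsto (fun k => pnorm P (z k - zstar)) atTop (nhds 0))
    (hconvt : Tendsto (fun k => pnorm P (zt k - zstar)) atTop (nhds 0))
    -- (A3)(ii): projected dual-ascent update
    (η : ℝ) (hη : 0 < η)
    (hdualup : ∀ k : ℕ, ∀ j : Fin m,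
      yPart (z (k + 1)) j = max (yPart (z k) j + η * g j (xPart (zt (k + 1)))) 0)
    -- (A3)(iii): P-Lipschitz continuity
    (hLip : ∀ t : ℝ, 0 < t → ∀ j : Fin m, ∃ Lx : ℝ, 0 < Lx ∧ ∃ Ly : ℝ, 0 < Ly ∧
      ∀ w w' : Zsp n m, pnorm P (w - zstar) < t → pnorm P (w' - zstar) < t →
        g j (xPart w) - g j (xPart w') ≤ Lx * pnorm P (w - w') ∧
        |yPart w j - yPart w' j| ≤ Ly * pnorm P (w - w')) :
    -- conclusion: finite identification of the set M
    ∃ K : ℕ, ∀ k : ℕ, K ≤ k →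
      (∀ j : Fin m, 0 ≤ yPart (z k) j) ∧
      (∀ j : Fin m, g j (xPart zstar) < 0 →
        yPart (z k) j = 0 ∧ g j (xPart (z k)) < 0) ∧
      (∀ j : Fin m, g j (xPart zstar) = 0 → 0 < yPart zstar j →
        0 < yPart (z k) j) := by
  classical
  simp only [Sstar, saddleF, Set.mem_setOf_eq] at hzstar
  obtain ⟨hy0, -, v, hvN, hveq⟩ := hzstar
  simp only [normalConePos, Set.mem_setOf_eq] at hvN
  have hveq' : ∀ j, v j = g j (xPart zstar) := by
    intro j
    have h := hveq j
    have h0 : yPart (0 : Zsp n m) j = 0 := rfl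
    rw [h0] at h
    linarith
  have hzz : pnorm P (zstar - zstar) = 0 := by
    rw [sub_self]
    unfold pnorm
    have h0 : toVec (0 : Zsp n m) = 0 := rfl
    rw [h0, zero_dotProduct, Real.sqrt_zero]
  -- complementarity: g_j(x*) < 0 → y*_j = 0
  have hcomp : ∀ j, g j (xPart zstar) < 0 → yPart zstar j = 0 := by
    intro j hc
    have hw : ∀ i, 0 ≤ Function.update (yPart zstar) j 0 i := by
      intro i
      by_cases hij : i = j
      · subst hij; simp
      · rw [Function.update_of_ne hij]; exact hy0 i
    have hsum := hvN _ hw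
    have hs : ∑ i, v i * (Function.update (yPart zstar) j 0 i - yPart zstar i)
        = v j * (0 - yPart zstar j) := by
      rw [Fintype.sum_eq_single j (fun i hij => by
        rw [Function.update_of_ne hij]; ring)]
      simp
    rw [hs] at hsum
    have hvj : v j < 0 := by rw [hveq' j]; exact hc
    have hyj := hy0 j
    nlinarith
  -- nonnegativity of y^k for k ≥ 1
  have hnn : ∀ k : ℕ, 1 ≤ k → ∀ j, 0 ≤ yPart (z k) j := by
    intro k hk j
    obtain ⟨l, rfl⟩ : ∃ l, k = l + 1 := ⟨k - 1, by omega⟩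
    rw [hdualup l j]
    exact le_max_right _ _
  -- eventual identification for j with g_j(x*) < 0
  have hE1 : ∀ j : Fin m, ∃ K : ℕ, ∀ k, K ≤ k →
      g j (xPart zstar) < 0 → yPart (z k) j = 0 ∧ g j (xPart (z k)) < 0 := by
    intro j
    by_cases hc : g j (xPart zstar) < 0
    · obtain ⟨Lx, hLx, Ly, hLy, hL⟩ := hLip 1 one_pos j
      set c := g j (xPart zstar) with hcdef
      have hc' : (0:ℝ) < -c := by linarith
      set δ := min 1 (min ((-c)/(2*Lx)) (η*(-c)/(2*Ly))) with hδdef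
      have hδ : 0 < δ := by
        apply lt_min one_pos
        exact lt_min (div_pos hc' (by positivity))
          (div_pos (mul_pos hη hc') (by positivity))
      have hδ1 : δ ≤ 1 := min_le_left _ _
      have hδa : δ * (2*Lx) ≤ -c :=
        (le_div_iff₀ (by positivity)).1
          (le_trans (min_le_right _ _) (min_le_left _ _))
      have hδb : δ * (2*Ly) ≤ η*(-c) :=
        (le_div_iff₀ (by positivity)).1
          (le_trans (min_le_right _ _) (min_le_right _ _))
      obtain ⟨K1, hK1⟩ := Filter.eventually_atTop.1 (hconv.eventually (gt_mem_nhds hδ))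
      obtain ⟨K2, hK2⟩ := Filter.eventually_atTop.1 (hconvt.eventually (gt_mem_nhds hδ))
      refine ⟨max K1 K2 + 1, fun k hk _ => ?_⟩
      obtain ⟨l, rfl⟩ : ∃ l, k = l + 1 := ⟨k - 1, by omega⟩
      have hzl : pnorm P (z l - zstar) < δ := hK1 l (by omega)
      have hzk : pnorm P (z (l+1) - zstar) < δ := hK1 (l+1) (by omega)
      have hztk : pnorm P (zt (l+1) - zstar) < δ := hK2 (l+1) (by omega)
      have h0 : pnorm P (zstar - zstar) < 1 := by rw [hzz]; exact one_pos
      -- bound on g_j at zt (l+1)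
      have hgzt : g j (xPart (zt (l+1))) - c ≤ Lx * pnorm P (zt (l+1) - zstar) :=
        (hL _ _ (lt_of_lt_of_le hztk hδ1) h0).1
      have hgzt' : g j (xPart (zt (l+1))) < c + Lx * δ := by
        have := mul_lt_mul_of_pos_left hztk hLx
        linarith
      -- bound on y^l_j
      have hyl : |yPart (z l) j - yPart zstar j| ≤ Ly * pnorm P (z l - zstar) :=
        (hL _ _ (lt_of_lt_of_le hzl hδ1) h0).2
      have hyl' : yPart (z l) j ≤ Ly * δ := by
        have h1 := mul_lt_mul_of_pos_left hzl hLy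
        have h2 := hcomp j hc
        have h3 := le_abs_self (yPart (z l) j - yPart zstar j)
        linarith
      have hB' : η * g j (xPart (zt (l+1))) ≤ η * (c + Lx*δ) :=
        mul_le_mul_of_nonneg_left hgzt'.le hη.le
      have hηLx : η * (δ * (2*Lx)) ≤ η * (-c) := mul_le_mul_of_nonneg_left hδa hη.le
      have harg : yPart (z l) j + η * g j (xPart (zt (l+1))) ≤ 0 := by nlinarith
      constructor
      · rw [hdualup l j]
        exact max_eq_right harg
      · have hg1 : g j (xPart (z (l+1))) - c ≤ Lx * pnorm P (z (l+1) - zstar) :=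
          (hL _ _ (lt_of_lt_of_le hzk hδ1) h0).1
        have := mul_lt_mul_of_pos_left hzk hLx
        nlinarith
    · exact ⟨0, fun k _ hck => absurd hck hc⟩
  -- eventual positivity for j with y*_j > 0
  have hE2 : ∀ j : Fin m, ∃ K : ℕ, ∀ k, K ≤ k →
      0 < yPart zstar j → 0 < yPart (z k) j := by
    intro j
    by_cases hy : 0 < yPart zstar j
    · obtain ⟨Lx, hLx, Ly, hLy, hL⟩ := hLip 1 one_pos j
      set δ := min 1 (yPart zstar j / (2*Ly)) with hδdef
      have hδ : 0 < δ := lt_min one_pos (div_pos hy (by positivity))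
      have hδ2 : δ * (2*Ly) ≤ yPart zstar j :=
        (le_div_iff₀ (by positivity)).1 (min_le_right _ _)
      obtain ⟨K1, hK1⟩ := Filter.eventually_atTop.1 (hconv.eventually (gt_mem_nhds hδ))
      refine ⟨K1, fun k hk _ => ?_⟩
      have hzk : pnorm P (z k - zstar) < δ := hK1 k hk
      have h0 : pnorm P (zstar - zstar) < 1 := by rw [hzz]; exact one_pos
      have h := (hL _ _ (lt_of_lt_of_le hzk (min_le_left _ _)) h0).2
      have h1 : -(Ly * pnorm P (z k - zstar)) ≤ yPart (z k) j - yPart zstar j := by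
        have := neg_abs_le (yPart (z k) j - yPart zstar j)
        linarith
      have h2 := mul_lt_mul_of_pos_left hzk hLy
      linarith
    · exact ⟨0, fun k _ hyk => absurd hyk hy⟩
  choose K1f hK1f using hE1
  choose K2f hK2f using hE2
  refine ⟨Finset.univ.sup K1f + Finset.univ.sup K2f + 1, fun k hk => ?_⟩
  refine ⟨hnn k (by omega), fun j hc => hK1f j k ?_ hc, fun j _ hyj => hK2f j k ?_ hyj⟩
  · have := Finset.le_sup (f := K1f) (Finset.mem_univ j); omega
  · have := Finset.le_sup (f := K2f) (Finset.mem_univ j); omega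
end
end

section
/- Let P be a nonzero symmetric positive semidefinite (n+m)×(n+m) matrix, S ⊆ ℝⁿ⁺ᵐ a set, α > 0, and z ∈ ℝⁿ⁺ᵐ a point satisfying α·dist₂(z, S) ≤ dist₂(0, F(z)). Then (α/√λmax(P))·max{dist₂(z, S), dist_P(z, S)/√λmax(P)} ≤ dist_{P†}(0, F(z) ∩ range(P)). -/
noncomputable section

open scoped ENNReal
open Classical Filter Topology

/-- `B` is the Moore–Penrose pseudoinverse of `A`. -/
def IsMoorePenrose {ι : Type*} [Fintype ι] (A B : Matrix ι ι ℝ) : Prop :=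
  A * B * A = A ∧ B * A * B = B ∧
  (A * B).transpose = A * B ∧ (B * A).transpose = B * A

/-- ℝ≥0∞-valued P-seminorm distance from a point to a set (⊤ on the empty set). -/
def edistPto {n m : ℕ} (P : Matrix (Fin n ⊕ Fin m) (Fin n ⊕ Fin m) ℝ)
    (z : Zsp n m) (S : Set (Zsp n m)) : ℝ≥0∞ :=
  ⨅ w ∈ S, ENNReal.ofReal (pnorm P (z - w))

/-- The range (column space) of `P`, regarded as a subset of the primal-dual space. -/
def rangeSet {n m : ℕ} (P : Matrix (Fin n ⊕ Fin m) (Fin n ⊕ Fin m) ℝ) :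
    Set (Zsp n m) := {w | ∃ v : (Fin n ⊕ Fin m) → ℝ, P.mulVec v = toVec w}

set_option linter.unusedSectionVars false

namespace Stmt8Aux

open Matrix

variable {ι : Type*} [Fintype ι] [DecidableEq ι]

lemma dot_self_nonneg (u : ι → ℝ) : 0 ≤ u ⬝ᵥ u :=
  Finset.sum_nonneg fun i _ => mul_self_nonneg (u i)

lemma dot_cs (u v : ι → ℝ) :
    u ⬝ᵥ v ≤ Real.sqrt (u ⬝ᵥ u) * Real.sqrt (v ⬝ᵥ v) := by
  have h := Finset.sum_mul_sq_le_sq_mul_sq Finset.univ u v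
  calc u ⬝ᵥ v ≤ Real.sqrt ((u ⬝ᵥ v) ^ 2) := by
        rw [Real.sqrt_sq_eq_abs]; exact le_abs_self _
    _ ≤ Real.sqrt ((u ⬝ᵥ u) * (v ⬝ᵥ v)) := by
        apply Real.sqrt_le_sqrt
        simpa [dotProduct, sq] using h
    _ = Real.sqrt (u ⬝ᵥ u) * Real.sqrt (v ⬝ᵥ v) := Real.sqrt_mul (dot_self_nonneg u) _

lemma psd_cs {A : Matrix ι ι ℝ} (hA : A.PosSemidef) (a b : ι → ℝ) :
    a ⬝ᵥ A *ᵥ b ≤ Real.sqrt (a ⬝ᵥ A *ᵥ a) * Real.sqrt (b ⬝ᵥ A *ᵥ b) := by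
  open scoped MatrixOrder in
  obtain ⟨B, rfl⟩ := CStarAlgebra.nonneg_iff_eq_star_mul_self.mp hA.nonneg
  rw [Matrix.star_eq_conjTranspose]
  have key : ∀ x y : ι → ℝ, x ⬝ᵥ (Bᴴ * B) *ᵥ y = (B *ᵥ x) ⬝ᵥ (B *ᵥ y) := by
    intro x y
    rw [← Matrix.mulVec_mulVec, Matrix.dotProduct_mulVec x,
      Matrix.conjTranspose_eq_transpose_of_trivial, Matrix.vecMul_transpose]
  rw [key, key, key]
  exact dot_cs _ _

lemma rayleigh {A : Matrix ι ι ℝ} (hA : A.IsHermitian) {l : ℝ}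
    (hl : ∀ i, hA.eigenvalues i ≤ l) (v : ι → ℝ) :
    v ⬝ᵥ A *ᵥ v ≤ l * (v ⬝ᵥ v) := by
  have hmem := hA.eigenvectorUnitary.2
  have hspec := hA.spectral_theorem
  set U : Matrix ι ι ℝ := (hA.eigenvectorUnitary : Matrix ι ι ℝ) with hUdef
  have hstar : star U = Uᵀ := by
    rw [Matrix.star_eq_conjTranspose, Matrix.conjTranspose_eq_transpose_of_trivial]
  have hUU : U * Uᵀ = 1 := by
    rw [← hstar]; exact Matrix.mem_unitaryGroup_iff.mp hmem
  set u : ι → ℝ := Uᵀ *ᵥ v with hu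
  have hvU : v ᵥ* U = u := (Matrix.mulVec_transpose U v).symm
  have key : v ⬝ᵥ A *ᵥ v
      = u ⬝ᵥ (Matrix.diagonal (RCLike.ofReal ∘ hA.eigenvalues) *ᵥ u) := by
    conv_lhs => rw [hspec]
    rw [Unitary.conjStarAlgAut_apply, ← hUdef]
    rw [hstar, ← Matrix.mulVec_mulVec, ← Matrix.mulVec_mulVec,
      Matrix.dotProduct_mulVec, hvU, ← hu]
  have huu : u ⬝ᵥ u = v ⬝ᵥ v := by
    calc u ⬝ᵥ u = (v ᵥ* U) ⬝ᵥ u := by rw [hvU]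
      _ = v ⬝ᵥ (U *ᵥ u) := (Matrix.dotProduct_mulVec v U u).symm
      _ = v ⬝ᵥ ((U * Uᵀ) *ᵥ v) := by rw [hu, Matrix.mulVec_mulVec]
      _ = v ⬝ᵥ v := by rw [hUU, Matrix.one_mulVec]
  have hD : u ⬝ᵥ (Matrix.diagonal (RCLike.ofReal ∘ hA.eigenvalues) *ᵥ u)
      ≤ l * (u ⬝ᵥ u) := by
    rw [dotProduct, dotProduct, Finset.mul_sum]
    apply Finset.sum_le_sum
    intro i _
    rw [Matrix.mulVec_diagonal]
    have hco : (RCLike.ofReal ∘ hA.eigenvalues) i = hA.eigenvalues i := rfl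
    rw [hco]
    nlinarith [hl i, mul_self_nonneg (u i)]
  rw [key, ← huu]
  exact hD

lemma mp_unique {A B C : Matrix ι ι ℝ}
    (hB : IsMoorePenrose A B) (hC : IsMoorePenrose A C) : B = C := by
  obtain ⟨hB1, hB2, hB3, hB4⟩ := hB
  obtain ⟨hC1, hC2, hC3, hC4⟩ := hC
  have hAB : A * B = A * C := by
    calc A * B = (A * B)ᵀ := hB3.symm
      _ = ((A * C * A) * B)ᵀ := by rw [hC1]
      _ = ((A * C) * (A * B))ᵀ := by rw [mul_assoc (A * C) A B]
      _ = (A * B)ᵀ * (A * C)ᵀ := by rw [Matrix.transpose_mul]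
      _ = (A * B) * (A * C) := by rw [hB3, hC3]
      _ = ((A * B) * A) * C := by rw [mul_assoc (A * B) A C]
      _ = A * C := by rw [hB1]
  have hBA : B * A = C * A := by
    calc B * A = (B * A)ᵀ := hB4.symm
      _ = (B * (A * C * A))ᵀ := by rw [hC1]
      _ = ((B * A) * (C * A))ᵀ := by
          rw [← mul_assoc B (A * C) A, ← mul_assoc B A C, mul_assoc (B * A) C A]
      _ = (C * A)ᵀ * (B * A)ᵀ := by rw [Matrix.transpose_mul]
      _ = (C * A) * (B * A) := by rw [hB4, hC4]
      _ = C * (A * B * A) := by rw [mul_assoc C A (B * A), ← mul_assoc A B A]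
      _ = C * A := by rw [hB1]
  calc B = B * A * B := hB2.symm
    _ = C * A * B := by rw [hBA]
    _ = C * (A * B) := by rw [mul_assoc]
    _ = C * (A * C) := by rw [hAB]
    _ = C * A * C := by rw [← mul_assoc]
    _ = C := hC2

lemma pd_transpose {A B : Matrix ι ι ℝ} (hAt : Aᵀ = A)
    (hB : IsMoorePenrose A B) : Bᵀ = B := by
  obtain ⟨hB1, hB2, hB3, hB4⟩ := hB
  refine mp_unique ⟨?_, ?_, ?_, ?_⟩ ⟨hB1, hB2, hB3, hB4⟩
  · have := congrArg Matrix.transpose hB1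
    simpa [Matrix.transpose_mul, hAt, mul_assoc] using this
  · have := congrArg Matrix.transpose hB2
    simpa [Matrix.transpose_mul, hAt, mul_assoc] using this
  · have h : A * Bᵀ = B * A := by
      calc A * Bᵀ = Aᵀᵀ * Bᵀ := by rw [Matrix.transpose_transpose]
        _ = (B * Aᵀ)ᵀ := by rw [Matrix.transpose_mul, Matrix.transpose_transpose]
        _ = (B * A)ᵀ := by rw [hAt]
        _ = B * A := hB4
    rw [h]; exact hB4
  · have h : Bᵀ * A = A * B := by
      calc Bᵀ * A = Bᵀ * Aᵀᵀ := by rw [Matrix.transpose_transpose]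
        _ = (Aᵀ * B)ᵀ := by rw [Matrix.transpose_mul, Matrix.transpose_transpose]
        _ = (A * B)ᵀ := by rw [hAt]
        _ = A * B := hB3
    rw [h]; exact hB3

end Stmt8Aux

open Matrix in
/-- Lemma: Euclidean metric subregularity implies the P-seminorm bound. -/
theorem stmt8
    (n m : ℕ) (hn : 0 < n) (hm : 0 < m)
    (f : (Fin n → ℝ) → ℝ) (g : Fin m → (Fin n → ℝ) → ℝ)
    (hf : ConvexOn ℝ Set.univ f) (hg : ∀ j, ConvexOn ℝ Set.univ (g j))
    (P : Matrix (Fin n ⊕ Fin m) (Fin n ⊕ Fin m) ℝ)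
    (hP : P.PosSemidef) (hP0 : P ≠ 0)
    (lmax : ℝ) (hlmax : IsMaxEigen P lmax)
    (Pd : Matrix (Fin n ⊕ Fin m) (Fin n ⊕ Fin m) ℝ) (hPd : IsMoorePenrose P Pd)
    (S : Set (Zsp n m)) (α : ℝ) (hα : 0 < α) (z : Zsp n m)
    (hsub : ENNReal.ofReal α * EMetric.infEdist z S ≤
      EMetric.infEdist (0 : Zsp n m) (saddleF f g z)) :
    ENNReal.ofReal (α / Real.sqrt lmax) *
      max (EMetric.infEdist z S)
        (edistPto P z S / ENNReal.ofReal (Real.sqrt lmax)) ≤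
    edistQ Pd (saddleF f g z ∩ rangeSet P) := by
  classical
  obtain ⟨⟨v0, hv0ne, hv0eig⟩, hmaxall⟩ := hlmax
  have hherm : P.IsHermitian := hP.1
  -- every eigenvalue is at most lmax
  have heig : ∀ i, hherm.eigenvalues i ≤ lmax := by
    intro i
    have hb := hherm.mulVec_eigenvectorBasis i
    have hne : ⇑(hherm.eigenvectorBasis i) ≠ (0 : (Fin n ⊕ Fin m) → ℝ) := by
      intro h
      apply hherm.eigenvectorBasis.orthonormal.ne_zero i
      ext j
      exact congrFun h j
    exact hmaxall _ _ hne hb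
  have hray : ∀ v : (Fin n ⊕ Fin m) → ℝ, v ⬝ᵥ P *ᵥ v ≤ lmax * (v ⬝ᵥ v) :=
    Stmt8Aux.rayleigh hherm heig
  have hpsd : ∀ v : (Fin n ⊕ Fin m) → ℝ, 0 ≤ v ⬝ᵥ P *ᵥ v := by
    intro v
    simpa using hP.dotProduct_mulVec_nonneg v
  have hlnn : 0 ≤ lmax := by
    have h1 : 0 ≤ v0 ⬝ᵥ P *ᵥ v0 := hpsd v0
    rw [hv0eig] at h1
    have h2 : v0 ⬝ᵥ (lmax • v0) = lmax * (v0 ⬝ᵥ v0) := by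
      simp [dotProduct_smul, smul_eq_mul]
    have h3 : 0 < v0 ⬝ᵥ v0 :=
      lt_of_le_of_ne (Stmt8Aux.dot_self_nonneg v0)
        (Ne.symm fun h => hv0ne (dotProduct_self_eq_zero.mp h))
    nlinarith
  have hlpos : 0 < lmax := by
    rcases hlnn.lt_or_eq with h | h
    · exact h
    · exfalso
      apply hP0
      have hz : ∀ v : (Fin n ⊕ Fin m) → ℝ, P *ᵥ v = 0 := by
        intro v
        have h0 : v ⬝ᵥ P *ᵥ v = 0 :=
          le_antisymm (by simpa [← h] using hray v) (hpsd v)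
        have h0' : star v ⬝ᵥ P *ᵥ v = 0 := by simpa using h0
        exact (hP.dotProduct_mulVec_zero_iff v).mp h0'
      ext i j
      have := congrFun (hz (Pi.single j 1)) i
      simpa [Matrix.mulVec_single] using this
  have hslpos : 0 < Real.sqrt lmax := Real.sqrt_pos.mpr hlpos
  have hPt : Pᵀ = P := by
    rw [← Matrix.conjTranspose_eq_transpose_of_trivial]
    exact hherm
  have hPdt : Pdᵀ = Pd := Stmt8Aux.pd_transpose hPt hPd
  obtain ⟨hmp1, hmp2, hmp3, hmp4⟩ := hPd
  -- the Euclidean norm as a square root of a dot product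
  have hnorm_eq : ∀ u : Zsp n m, ‖u‖ = Real.sqrt (toVec u ⬝ᵥ toVec u) := by
    intro u
    rw [EuclideanSpace.norm_eq]
    congr 1
    exact Finset.sum_congr rfl fun i _ => by
      simp [toVec, Real.norm_eq_abs, sq_abs, sq]
  -- (i) the P-seminorm is controlled by the Euclidean norm
  have hpnormP : ∀ u : Zsp n m, pnorm P u ≤ Real.sqrt lmax * ‖u‖ := by
    intro u
    rw [hnorm_eq, pnorm, ← Real.sqrt_mul hlnn]
    exact Real.sqrt_le_sqrt (hray (toVec u))
  -- (ii) on the range of P the Euclidean norm is controlled by the Pd-seminorm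
  have hkey : ∀ w : Zsp n m, w ∈ rangeSet P → ‖w‖ ≤ Real.sqrt lmax * pnorm Pd w := by
    rintro w ⟨v, hv⟩
    have hPPd : P *ᵥ (Pd *ᵥ toVec w) = toVec w := by
      rw [← hv, Matrix.mulVec_mulVec, Matrix.mulVec_mulVec, hmp1]
    have hcs := Stmt8Aux.psd_cs hP (toVec w) (Pd *ᵥ toVec w)
    rw [hPPd, dotProduct_comm (Pd *ᵥ toVec w)] at hcs
    have hq : Real.sqrt (toVec w ⬝ᵥ Pd *ᵥ toVec w) = pnorm Pd w := rfl
    rw [hq] at hcs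
    have hb : Real.sqrt (toVec w ⬝ᵥ P *ᵥ toVec w)
        ≤ Real.sqrt lmax * Real.sqrt (toVec w ⬝ᵥ toVec w) := by
      rw [← Real.sqrt_mul hlnn]
      exact Real.sqrt_le_sqrt (hray (toVec w))
    have hpn : 0 ≤ pnorm Pd w := Real.sqrt_nonneg _
    have hchain : toVec w ⬝ᵥ toVec w
        ≤ Real.sqrt lmax * Real.sqrt (toVec w ⬝ᵥ toVec w) * pnorm Pd w :=
      hcs.trans (mul_le_mul_of_nonneg_right hb hpn)
    rw [hnorm_eq]
    rcases eq_or_lt_of_le (Stmt8Aux.dot_self_nonneg (toVec w)) with h0 | h0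
    · rw [← h0, Real.sqrt_zero]
      exact mul_nonneg (Real.sqrt_nonneg _) hpn
    · have hs : 0 < Real.sqrt (toVec w ⬝ᵥ toVec w) := Real.sqrt_pos.mpr h0
      have h2' : Real.sqrt (toVec w ⬝ᵥ toVec w) * Real.sqrt (toVec w ⬝ᵥ toVec w)
          = toVec w ⬝ᵥ toVec w := Real.mul_self_sqrt h0.le
      nlinarith [hchain, hs, h2']
  -- pass to the extended nonnegative reals
  set c : ℝ≥0∞ := ENNReal.ofReal (Real.sqrt lmax) with hc
  have hc0 : c ≠ 0 := by
    simp only [hc, ne_eq, ENNReal.ofReal_eq_zero, not_le]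
    exact hslpos
  have hcT : c ≠ ⊤ := ENNReal.ofReal_ne_top
  have hED : edistPto P z S / c ≤ EMetric.infEdist z S := by
    refine Metric.le_infEDist.mpr ?_
    intro s hs
    have h1 : edistPto P z S ≤ ENNReal.ofReal (pnorm P (z - s)) := by
      exact iInf₂_le s hs
    have h2 : ENNReal.ofReal (pnorm P (z - s)) ≤ c * edist z s := by
      rw [edist_dist, dist_eq_norm]
      calc ENNReal.ofReal (pnorm P (z - s))
          ≤ ENNReal.ofReal (Real.sqrt lmax * ‖z - s‖) :=
            ENNReal.ofReal_le_ofReal (hpnormP _)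
        _ = c * ENNReal.ofReal ‖z - s‖ := ENNReal.ofReal_mul (Real.sqrt_nonneg _)
    rw [ENNReal.div_le_iff hc0 hcT]
    calc edistPto P z S ≤ c * edist z s := h1.trans h2
      _ = edist z s * c := mul_comm _ _
  rw [max_eq_left hED, edistQ]
  refine le_iInf₂ fun w hw => ?_
  obtain ⟨hwF, hwR⟩ := hw
  have hchain : ENNReal.ofReal α * EMetric.infEdist z S
      ≤ c * ENNReal.ofReal (pnorm Pd w) := by
    calc ENNReal.ofReal α * EMetric.infEdist z S
        ≤ EMetric.infEdist 0 (saddleF f g z) := hsub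
      _ ≤ edist (0 : Zsp n m) w := EMetric.infEdist_le_edist_of_mem hwF
      _ = ENNReal.ofReal ‖w‖ := by rw [edist_dist, dist_zero_left]
      _ ≤ ENNReal.ofReal (Real.sqrt lmax * pnorm Pd w) :=
          ENNReal.ofReal_le_ofReal (hkey w hwR)
      _ = c * ENNReal.ofReal (pnorm Pd w) := ENNReal.ofReal_mul (Real.sqrt_nonneg _)
  have hdiv : ENNReal.ofReal (α / Real.sqrt lmax) = ENNReal.ofReal α / c :=
    ENNReal.ofReal_div_of_pos hslpos
  rw [hdiv, div_eq_mul_inv, mul_right_comm, ← div_eq_mul_inv,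
    ENNReal.div_le_iff hc0 hcT]
  calc ENNReal.ofReal α * EMetric.infEdist z S
      ≤ c * ENNReal.ofReal (pnorm Pd w) := hchain
    _ = ENNReal.ofReal (pnorm Pd w) * c := mul_comm _ _
end
end

section
/- Let T : ℝᵈ → ℝᵈ be a map, M : ℝᵈ ⇉ ℝᵈ a monotone set-valued operator, and P a symmetric positive semidefinite d×d matrix such that P(u − T(u)) ∈ M(T(u)) for every u ∈ ℝᵈ. Then T is firmly nonexpansive in the P-seminorm: for all u, v ∈ ℝᵈ, ‖T(u) − T(v)‖_P² + ‖(u − T(u)) − (v − T(v))‖_P² ≤ ‖u − v‖_P². -/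
noncomputable section

open Matrix

lemma stmt9_aux_nonneg (d : ℕ) (P : Matrix (Fin d) (Fin d) ℝ) (hP : P.PosSemidef)
    (x : Fin d → ℝ) : 0 ≤ dotProduct x (P.mulVec x) := by
  simpa using hP.dotProduct_mulVec_nonneg x

lemma stmt9_aux_symm (d : ℕ) (P : Matrix (Fin d) (Fin d) ℝ) (hP : P.PosSemidef)
    (a b : Fin d → ℝ) :
    dotProduct b (P.mulVec a) = dotProduct a (P.mulVec b) := by
  have hs : Pᵀ = P := by simpa using hP.1.eq
  rw [Matrix.dotProduct_mulVec, ← Matrix.mulVec_transpose, hs, dotProduct_comm]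

/-- Proposition: firm nonexpansiveness in the P-seminorm. -/
theorem stmt9
    (d : ℕ) (T : (Fin d → ℝ) → (Fin d → ℝ))
    (M : (Fin d → ℝ) → Set (Fin d → ℝ))
    (hM : ∀ x y p q : Fin d → ℝ, p ∈ M x → q ∈ M y →
      0 ≤ ∑ i, (x i - y i) * (p i - q i))
    (P : Matrix (Fin d) (Fin d) ℝ) (hP : P.PosSemidef)
    (hT : ∀ u : Fin d → ℝ, P.mulVec (u - T u) ∈ M (T u)) :
    ∀ u v : Fin d → ℝ,
      Real.sqrt (dotProduct (T u - T v) (P.mulVec (T u - T v))) ^ 2 +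
        Real.sqrt (dotProduct ((u - T u) - (v - T v))
          (P.mulVec ((u - T u) - (v - T v)))) ^ 2 ≤
      Real.sqrt (dotProduct (u - v) (P.mulVec (u - v))) ^ 2 := by
  intro u v
  set a : Fin d → ℝ := T u - T v with ha
  set b : Fin d → ℝ := (u - T u) - (v - T v) with hb
  have hmono : 0 ≤ dotProduct a (P.mulVec b) := by
    have h := hM (T u) (T v) (P.mulVec (u - T u)) (P.mulVec (v - T v)) (hT u) (hT v)
    have hPb : P.mulVec b = P.mulVec (u - T u) - P.mulVec (v - T v) := by
      rw [hb, Matrix.mulVec_sub]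
    calc 0 ≤ ∑ i, (T u i - T v i) * (P.mulVec (u - T u) i - P.mulVec (v - T v) i) := h
      _ = dotProduct a (P.mulVec b) := by
          rw [hPb]; simp [dotProduct, ha]
  rw [Real.sq_sqrt (stmt9_aux_nonneg d P hP _), Real.sq_sqrt (stmt9_aux_nonneg d P hP _),
    Real.sq_sqrt (stmt9_aux_nonneg d P hP _)]
  have huv : u - v = a + b := by rw [ha, hb]; abel
  rw [huv, Matrix.mulVec_add, dotProduct_add, add_dotProduct,
    add_dotProduct, stmt9_aux_symm d P hP a b]
  linarith [hmono]
end
end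

section
/- Suppose z* = (x*, y*) satisfies g_j(x*) < 0 for every j ∈ N and y*_j > 0 for every j ∈ B_a, and suppose the radius of active-set stability δ_G is finite. Then the function Δ : (0, ∞) → ℝ ∪ {+∞} has exactly one fixed point: there exists a unique t* ∈ (0, ∞) with Δ(t*) = t*. -/
noncomputable section

open scoped ENNReal
open Classical Filter Topology

/-- The optimal primal Lipschitz modulus L̄ˣ_j(t) on the P-ball of radius t around z*. -/
def Lxbar {n m : ℕ} (g : Fin m → (Fin n → ℝ) → ℝ)
    (P : Matrix (Fin n ⊕ Fin m) (Fin n ⊕ Fin m) ℝ) (zstar : Zsp n m)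
    (j : Fin m) (t : ℝ) : ℝ :=
  sSup {r : ℝ | ∃ w : Zsp n m, 0 < pnorm P (w - zstar) ∧ pnorm P (w - zstar) ≤ t ∧
    r = max (g j (xPart w) - g j (xPart zstar)) 0 / pnorm P (w - zstar)}

/-- The optimal dual Lipschitz modulus L̄ʸ_j(t) on the P-ball of radius t around z*. -/
def Lybar {n m : ℕ} (P : Matrix (Fin n ⊕ Fin m) (Fin n ⊕ Fin m) ℝ) (zstar : Zsp n m)
    (j : Fin m) (t : ℝ) : ℝ :=
  sSup {r : ℝ | ∃ w : Zsp n m, 0 < pnorm P (w - zstar) ∧ pnorm P (w - zstar) ≤ t ∧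
    r = max (yPart zstar j - yPart w j) 0 / pnorm P (w - zstar)}

/-- The set of radii of active-set stability around z*. -/
def stabSet {n m : ℕ} (g : Fin m → (Fin n → ℝ) → ℝ)
    (P : Matrix (Fin n ⊕ Fin m) (Fin n ⊕ Fin m) ℝ) (zstar : Zsp n m) : Set ℝ :=
  {t : ℝ | 0 < t ∧ ∀ w : Zsp n m, pnorm P (w - zstar) < t →
    (∀ j, g j (xPart zstar) < 0 → g j (xPart w) < 0) ∧
    (∀ j, g j (xPart zstar) = 0 → 0 < yPart zstar j → 0 < yPart w j)}

/-- The radius of active-set stability δ. -/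
def deltaG {n m : ℕ} (g : Fin m → (Fin n → ℝ) → ℝ)
    (P : Matrix (Fin n ⊕ Fin m) (Fin n ⊕ Fin m) ℝ) (zstar : Zsp n m) : ℝ :=
  sSup (stabSet g P zstar)

/-- The identifiable set M associated with the limit solution z*. -/
def Mset {n m : ℕ} (g : Fin m → (Fin n → ℝ) → ℝ) (zstar : Zsp n m) :
    Set (Zsp n m) :=
  {w | (∀ j, 0 ≤ yPart w j) ∧
    (∀ j, g j (xPart zstar) < 0 → g j (xPart w) < 0 ∧ yPart w j = 0) ∧
    (∀ j, g j (xPart zstar) = 0 → 0 < yPart zstar j → 0 < yPart w j)}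

/-- The dual function h(y) = inf_x (f(x) + ⟨y, G(x)⟩), with values in EReal. -/
def hdualFn {n m : ℕ} (f : (Fin n → ℝ) → ℝ) (g : Fin m → (Fin n → ℝ) → ℝ)
    (y : Fin m → ℝ) : EReal :=
  ⨅ x : Fin n → ℝ, ((f x + ∑ j, y j * g j x : ℝ) : EReal)

/-- The solution set S*_L of the reduced system (only constraints indexed by B). -/
def SstarL {n m : ℕ} (f : (Fin n → ℝ) → ℝ) (g : Fin m → (Fin n → ℝ) → ℝ)
    (zstar : Zsp n m) : Set (Zsp n m) :=
  {z | ((f (xPart z) : ℝ) : EReal) ≤ hdualFn f g (yPart z) ∧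
    (∀ j, g j (xPart zstar) = 0 → g j (xPart z) ≤ 0) ∧
    ∀ j, 0 ≤ yPart z j}

/-- The local metric subregularity modulus α_L. -/
def alphaL {n m : ℕ} (f : (Fin n → ℝ) → ℝ) (g : Fin m → (Fin n → ℝ) → ℝ)
    (zstar : Zsp n m) (τ : ℝ) : ℝ :=
  sInf {r : ℝ | ∃ z : Zsp n m, Metric.infDist z (Sstar f g) ≤ τ ∧
    0 < Metric.infDist z (SstarL f g zstar) ∧ (saddleF f g z).Nonempty ∧
    r = Metric.infDist (0 : Zsp n m) (saddleF f g z) /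
      Metric.infDist z (SstarL f g zstar)}

/-- The restricted metric subregularity modulus α_M over M ∩ B_P(z*, δ/2). -/
def alphaM {n m : ℕ} (f : (Fin n → ℝ) → ℝ) (g : Fin m → (Fin n → ℝ) → ℝ)
    (P : Matrix (Fin n ⊕ Fin m) (Fin n ⊕ Fin m) ℝ) (zstar : Zsp n m)
    (τ δ : ℝ) : ℝ :=
  sInf {r : ℝ | ∃ z : Zsp n m, Metric.infDist z (Sstar f g) ≤ τ ∧
    pnorm P (z - zstar) < δ / 2 ∧ z ∈ Mset g zstar ∧
    0 < Metric.infDist z (Sstar f g) ∧ (saddleF f g z).Nonempty ∧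
    r = Metric.infDist (0 : Zsp n m) (saddleF f g z) /
      Metric.infDist z (Sstar f g)}

/-- The function Δ, with values in ℝ≥0∞ (conventions: a/0 = ∞ for a > 0, inf ∅ = ∞). -/
def DeltaFn {n m : ℕ} (g : Fin m → (Fin n → ℝ) → ℝ)
    (P : Matrix (Fin n ⊕ Fin m) (Fin n ⊕ Fin m) ℝ) (zstar : Zsp n m)
    (t : ℝ) : ℝ≥0∞ :=
  min
    (⨅ j ∈ {j : Fin m | g j (xPart zstar) < 0},
      ENNReal.ofReal (-(g j (xPart zstar))) / ENNReal.ofReal (Lxbar g P zstar j t))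
    (⨅ j ∈ {j : Fin m | g j (xPart zstar) = 0 ∧ 0 < yPart zstar j},
      ENNReal.ofReal (yPart zstar j) / ENNReal.ofReal (Lybar P zstar j t))

/-! ### Auxiliary development for `stmt12` -/

section Stmt12Aux

variable {n m : ℕ} {P : Matrix (Fin n ⊕ Fin m) (Fin n ⊕ Fin m) ℝ}

/-- The quadratic form associated with `P`. -/
def qf (P : Matrix (Fin n ⊕ Fin m) (Fin n ⊕ Fin m) ℝ) (z : Zsp n m) : ℝ :=
  dotProduct (toVec z) (P.mulVec (toVec z))

lemma qf_pos (hP : P.PosDef) {z : Zsp n m} (hz : z ≠ 0) : 0 < qf P z := by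
  have := hP.dotProduct_mulVec_pos (x := toVec z) (by
    intro h; apply hz; ext i; exact congrFun h i)
  simpa [qf] using this

lemma qf_smul (s : ℝ) (z : Zsp n m) : qf P (s • z) = s ^ 2 * qf P z := by
  simp only [qf, toVec, dotProduct, Matrix.mulVec, PiLp.smul_apply, smul_eq_mul,
    Finset.mul_sum]
  apply Finset.sum_congr rfl
  intro i _
  apply Finset.sum_congr rfl
  intro k _
  ring

lemma qf_continuous (P : Matrix (Fin n ⊕ Fin m) (Fin n ⊕ Fin m) ℝ) : Continuous (qf P) := by
  have h1 : ∀ i, Continuous fun z : Zsp n m => z i := fun i =>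
    (continuous_apply i).comp (PiLp.continuous_ofLp 2 _)
  unfold qf toVec dotProduct Matrix.mulVec dotProduct
  continuity

lemma pnorm_nonneg (z : Zsp n m) : 0 ≤ pnorm P z := Real.sqrt_nonneg _

lemma pnorm_eq_sqrt (z : Zsp n m) : pnorm P z = Real.sqrt (qf P z) := rfl

lemma pnorm_pos (hP : P.PosDef) {z : Zsp n m} (hz : z ≠ 0) : 0 < pnorm P z :=
  Real.sqrt_pos.2 (qf_pos hP hz)

lemma pnorm_eq_zero (hP : P.PosDef) {z : Zsp n m} (h : pnorm P z = 0) : z = 0 := by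
  by_contra hz
  exact (pnorm_pos hP hz).ne' h

lemma pnorm_smul (hP : P.PosDef) (s : ℝ) (z : Zsp n m) :
    pnorm P (s • z) = |s| * pnorm P z := by
  rw [pnorm_eq_sqrt, pnorm_eq_sqrt, qf_smul, Real.sqrt_mul (sq_nonneg s), Real.sqrt_sq_eq_abs]

lemma pnorm_continuous (P : Matrix (Fin n ⊕ Fin m) (Fin n ⊕ Fin m) ℝ) :
    Continuous (pnorm P) :=
  Real.continuous_sqrt.comp (qf_continuous P)

lemma exists_pnorm_lower (hn : 0 < n) (hP : P.PosDef) :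
    ∃ c > (0:ℝ), ∀ z : Zsp n m, c * ‖z‖ ≤ pnorm P z := by
  haveI : Nonempty (Fin n ⊕ Fin m) := ⟨Sum.inl ⟨0, hn⟩⟩
  have hsph : (Metric.sphere (0 : Zsp n m) 1).Nonempty := by
    apply NormedSpace.sphere_nonempty.2
    norm_num
  have hcompact : IsCompact (Metric.sphere (0 : Zsp n m) 1) := isCompact_sphere _ _
  obtain ⟨z0, hz0mem, hz0min⟩ := hcompact.exists_isMinOn hsph (qf_continuous P).continuousOn
  have hz0ne : z0 ≠ 0 := by
    intro h
    rw [h] at hz0mem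
    simp at hz0mem
  have hc : 0 < qf P z0 := qf_pos hP hz0ne
  refine ⟨Real.sqrt (qf P z0), Real.sqrt_pos.2 hc, ?_⟩
  intro z
  rcases eq_or_ne z 0 with rfl | hz
  · simp [pnorm_eq_sqrt]
  · have hnz : (0:ℝ) < ‖z‖ := norm_pos_iff.2 hz
    have hmem : (‖z‖⁻¹ • z) ∈ Metric.sphere (0 : Zsp n m) 1 := by
      simp [norm_smul, abs_of_nonneg (inv_nonneg.2 hnz.le), inv_mul_cancel₀ hnz.ne']
    have h2 : qf P z0 ≤ (‖z‖⁻¹)^2 * qf P z := by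
      simpa [qf_smul] using hz0min hmem
    have h3 : qf P z0 * ‖z‖^2 ≤ qf P z := by
      have := mul_le_mul_of_nonneg_right h2 (sq_nonneg ‖z‖)
      calc qf P z0 * ‖z‖^2 ≤ (‖z‖⁻¹)^2 * qf P z * ‖z‖^2 := this
        _ = qf P z := by field_simp
    calc Real.sqrt (qf P z0) * ‖z‖ = Real.sqrt (qf P z0 * ‖z‖^2) := by
          rw [Real.sqrt_mul hc.le, Real.sqrt_sq hnz.le]
      _ ≤ Real.sqrt (qf P z) := Real.sqrt_le_sqrt h3
      _ = pnorm P z := (pnorm_eq_sqrt z).symm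

lemma isCompact_pball (hn : 0 < n) (hP : P.PosDef) (t : ℝ) :
    IsCompact {d : Zsp n m | pnorm P d ≤ t} := by
  obtain ⟨c, hc, hlow⟩ := exists_pnorm_lower hn hP
  have hclosed : IsClosed {d : Zsp n m | pnorm P d ≤ t} :=
    isClosed_le (pnorm_continuous P) continuous_const
  have hsub : {d : Zsp n m | pnorm P d ≤ t} ⊆ Metric.closedBall 0 (t / c) := by
    intro d hd
    simp only [Metric.mem_closedBall, dist_zero_right]
    rw [le_div_iff₀ hc, mul_comm]
    exact le_trans (hlow d) hd
  exact (isCompact_closedBall _ _).of_isClosed_subset hclosed hsub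

lemma exists_pnorm_eq (hn : 0 < n) (hP : P.PosDef) {t : ℝ} (ht : 0 < t) :
    ∃ d : Zsp n m, pnorm P d = t := by
  haveI : Nonempty (Fin n ⊕ Fin m) := ⟨Sum.inl ⟨0, hn⟩⟩
  obtain ⟨z0, hz0⟩ := exists_ne (0 : Zsp n m)
  have h0 : 0 < pnorm P z0 := pnorm_pos hP hz0
  refine ⟨(t / pnorm P z0) • z0, ?_⟩
  rw [pnorm_smul hP, abs_of_pos (div_pos ht h0)]
  field_simp

/-- The closed ball in the P-seminorm. -/
def pball (P : Matrix (Fin n ⊕ Fin m) (Fin n ⊕ Fin m) ℝ) (t : ℝ) : Set (Zsp n m) :=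
  {d | pnorm P d ≤ t}

/-- sup of φ over the P-ball of radius t. -/
def Mof (P : Matrix (Fin n ⊕ Fin m) (Fin n ⊕ Fin m) ℝ) (φ : Zsp n m → ℝ) (t : ℝ) : ℝ :=
  sSup (φ '' pball P t)

def ratioSet (P : Matrix (Fin n ⊕ Fin m) (Fin n ⊕ Fin m) ℝ) (φ : Zsp n m → ℝ) (t : ℝ) :
    Set ℝ :=
  {r | ∃ d : Zsp n m, 0 < pnorm P d ∧ pnorm P d ≤ t ∧ r = φ d / pnorm P d}

def Lof (P : Matrix (Fin n ⊕ Fin m) (Fin n ⊕ Fin m) ℝ) (φ : Zsp n m → ℝ) (t : ℝ) : ℝ :=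
  sSup (ratioSet P φ t)

section phi

variable (hn : 0 < n) (hP : P.PosDef) {φ : Zsp n m → ℝ}
  (hconv : ConvexOn ℝ Set.univ φ) (hcont : Continuous φ) (hzero : φ 0 = 0)
  (hnn : ∀ d, 0 ≤ φ d)

include hn hP hcont in
lemma bddAbove_image_pball (t : ℝ) : BddAbove (φ '' pball P t) :=
  ((isCompact_pball hn hP t).image hcont).bddAbove

include hP in
lemma mem_pball_zero {t : ℝ} (ht : 0 ≤ t) : (0 : Zsp n m) ∈ pball P t := by
  have h0 : pnorm P (0 : Zsp n m) = 0 := by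
    simpa using pnorm_smul hP 0 (0 : Zsp n m)
  simp [pball, h0, ht]

include hn hP hcont hzero in
lemma Mof_nonneg {t : ℝ} (ht : 0 ≤ t) : 0 ≤ Mof P φ t := by
  have h0 : φ 0 ≤ Mof P φ t :=
    le_csSup (bddAbove_image_pball hn hP hcont t) ⟨0, mem_pball_zero hP ht, rfl⟩
  linarith [hzero ▸ h0]

include hn hP hcont in
lemma Mof_mono {t₁ t₂ : ℝ} (h0 : 0 ≤ t₁) (h : t₁ ≤ t₂) : Mof P φ t₁ ≤ Mof P φ t₂ := by
  apply csSup_le_csSup (bddAbove_image_pball hn hP hcont t₂)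
  · exact ⟨φ 0, ⟨0, mem_pball_zero hP h0, rfl⟩⟩
  · exact Set.image_mono (fun d hd => le_trans hd h)

include hconv hzero in
lemma phi_smul_le {s : ℝ} (hs0 : 0 ≤ s) (hs1 : s ≤ 1) (d : Zsp n m) :
    φ (s • d) ≤ s * φ d := by
  have := hconv.2 (Set.mem_univ d) (Set.mem_univ (0 : Zsp n m)) hs0
    (show (0:ℝ) ≤ 1 - s by linarith) (by ring)
  simpa [hzero] using this

include hn hP hconv hcont hzero hnn

lemma ratio_le_Mof_div {t : ℝ} (ht : 0 < t) {r : ℝ} (hr : r ∈ ratioSet P φ t) :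
    r ≤ Mof P φ t / t := by
  obtain ⟨d, hd0, hdt, rfl⟩ := hr
  set ν := pnorm P d with hν
  have hd' : pnorm P ((t / ν) • d) = t := by
    rw [pnorm_smul hP, abs_of_pos (div_pos ht hd0)]
    field_simp
    exact hν.symm
  have hmem : (t / ν) • d ∈ pball P t := le_of_eq hd'
  have h1 : φ ((t / ν) • d) ≤ Mof P φ t :=
    le_csSup (bddAbove_image_pball hn hP hcont t) ⟨_, hmem, rfl⟩
  have hs0 : 0 ≤ ν / t := div_nonneg hd0.le ht.le
  have hs1 : ν / t ≤ 1 := (div_le_one ht).2 hdt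
  have hre : (ν / t) • ((t / ν) • d) = d := by
    rw [smul_smul, div_mul_div_comm, mul_comm ν t, div_self (by positivity), one_smul]
  have h2 : φ d ≤ (ν / t) * φ ((t / ν) • d) := by
    have := phi_smul_le hconv hzero hs0 hs1 ((t / ν) • d)
    rwa [hre] at this
  have h3 : φ d ≤ (ν / t) * Mof P φ t :=
    h2.trans (mul_le_mul_of_nonneg_left h1 hs0)
  rw [div_le_div_iff₀ hd0 ht]
  calc φ d * t ≤ ((ν / t) * Mof P φ t) * t := by nlinarith
    _ = Mof P φ t * ν := by field_simp

lemma ratioSet_nonempty {t : ℝ} (ht : 0 < t) : (ratioSet P φ t).Nonempty := by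
  obtain ⟨d, hd⟩ := exists_pnorm_eq hn hP ht
  exact ⟨φ d / pnorm P d, d, by rw [hd]; exact ht, le_of_eq hd, rfl⟩

lemma bddAbove_ratioSet {t : ℝ} (ht : 0 < t) : BddAbove (ratioSet P φ t) :=
  ⟨Mof P φ t / t, fun r hr => ratio_le_Mof_div hn hP hconv hcont hzero hnn ht hr⟩

lemma Lof_nonneg {t : ℝ} (ht : 0 < t) : 0 ≤ Lof P φ t := by
  obtain ⟨d, hd⟩ := exists_pnorm_eq hn hP ht
  have hmem : φ d / pnorm P d ∈ ratioSet P φ t := ⟨d, by rw [hd]; exact ht, le_of_eq hd, rfl⟩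
  have h1 : (0:ℝ) ≤ φ d / pnorm P d := div_nonneg (hnn d) (pnorm_nonneg d)
  exact h1.trans (le_csSup (bddAbove_ratioSet hn hP hconv hcont hzero hnn ht) hmem)

lemma Lof_mono {t₁ t₂ : ℝ} (h0 : 0 < t₁) (h : t₁ ≤ t₂) : Lof P φ t₁ ≤ Lof P φ t₂ := by
  apply csSup_le_csSup (bddAbove_ratioSet hn hP hconv hcont hzero hnn (h0.trans_le h))
    (ratioSet_nonempty hn hP hconv hcont hzero hnn h0)
  rintro r ⟨d, hd0, hdt, rfl⟩
  exact ⟨d, hd0, hdt.trans h, rfl⟩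

lemma Mof_eq_mul_Lof {t : ℝ} (ht : 0 < t) : Mof P φ t = t * Lof P φ t := by
  apply le_antisymm
  · refine csSup_le ⟨φ 0, 0, mem_pball_zero hP ht.le, rfl⟩ ?_
    rintro x ⟨d, hd, rfl⟩
    rcases eq_or_lt_of_le (pnorm_nonneg d (P := P)) with hd0 | hd0
    · have : d = 0 := pnorm_eq_zero hP hd0.symm
      rw [this, hzero]
      exact mul_nonneg ht.le (Lof_nonneg hn hP hconv hcont hzero hnn ht)
    · have hmem : φ d / pnorm P d ∈ ratioSet P φ t := ⟨d, hd0, hd, rfl⟩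
      have h1 : φ d / pnorm P d ≤ Lof P φ t :=
        le_csSup (bddAbove_ratioSet hn hP hconv hcont hzero hnn ht) hmem
      calc φ d = pnorm P d * (φ d / pnorm P d) := by field_simp
        _ ≤ t * (φ d / pnorm P d) :=
            mul_le_mul_of_nonneg_right hd (div_nonneg (hnn d) (pnorm_nonneg d))
        _ ≤ t * Lof P φ t := mul_le_mul_of_nonneg_left h1 ht.le
  · have h1 : Lof P φ t ≤ Mof P φ t / t :=
      csSup_le (ratioSet_nonempty hn hP hconv hcont hzero hnn ht)
        (fun r hr => ratio_le_Mof_div hn hP hconv hcont hzero hnn ht hr)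
    calc t * Lof P φ t ≤ t * (Mof P φ t / t) := mul_le_mul_of_nonneg_left h1 ht.le
      _ = Mof P φ t := by field_simp

lemma Mof_convexOn : ConvexOn ℝ (Set.Ici 0) (Mof P φ) := by
  refine ⟨convex_Ici 0, ?_⟩
  intro t₁ ht₁ t₂ ht₂ a b ha hb hab
  simp only [Set.mem_Ici] at ht₁ ht₂
  rcases eq_or_lt_of_le ha with rfl | ha'
  · simp only [zero_smul, zero_add, smul_eq_mul, zero_mul]
    have : b = 1 := by linarith
    rw [this]; simp
  rcases eq_or_lt_of_le hb with rfl | hb'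
  · simp only [zero_smul, add_zero, smul_eq_mul, zero_mul]
    have : a = 1 := by linarith
    rw [this]; simp
  set t := a * t₁ + b * t₂ with htdef
  have ht0 : 0 ≤ t := by positivity
  rcases eq_or_lt_of_le ht0 with ht0' | ht0'
  · have h1 : t₁ = 0 := by nlinarith
    have h2 : t₂ = 0 := by nlinarith
    simp only [smul_eq_mul, ← htdef, ← ht0', h1, h2]
    have heq : a * Mof P φ 0 + b * Mof P φ 0 = Mof P φ 0 := by
      rw [← add_mul, hab, one_mul]
    simp only [mul_zero, add_zero, zero_add]
    linarith
  refine csSup_le ⟨φ 0, 0, mem_pball_zero hP ht0, rfl⟩ ?_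
  rintro x ⟨d, hd, rfl⟩
  have hd1 : (t₁ / t) • d ∈ pball P t₁ := by
    show pnorm P _ ≤ t₁
    rw [pnorm_smul hP, abs_of_nonneg (div_nonneg ht₁ ht0)]
    calc t₁ / t * pnorm P d ≤ t₁ / t * t :=
        mul_le_mul_of_nonneg_left hd (div_nonneg ht₁ ht0)
      _ = t₁ := by field_simp
  have hd2 : (t₂ / t) • d ∈ pball P t₂ := by
    show pnorm P _ ≤ t₂
    rw [pnorm_smul hP, abs_of_nonneg (div_nonneg ht₂ ht0)]
    calc t₂ / t * pnorm P d ≤ t₂ / t * t :=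
        mul_le_mul_of_nonneg_left hd (div_nonneg ht₂ ht0)
      _ = t₂ := by field_simp
  have hdsum : a • ((t₁ / t) • d) + b • ((t₂ / t) • d) = d := by
    rw [smul_smul, smul_smul, ← add_smul]
    have : a * (t₁ / t) + b * (t₂ / t) = 1 := by field_simp; exact htdef.symm
    rw [this, one_smul]
  have hconv2 := hconv.2 (Set.mem_univ ((t₁ / t) • d)) (Set.mem_univ ((t₂ / t) • d)) ha hb hab
  rw [hdsum] at hconv2
  have hm1 : φ ((t₁ / t) • d) ≤ Mof P φ t₁ :=
    le_csSup (bddAbove_image_pball hn hP hcont t₁) ⟨_, hd1, rfl⟩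
  have hm2 : φ ((t₂ / t) • d) ≤ Mof P φ t₂ :=
    le_csSup (bddAbove_image_pball hn hP hcont t₂) ⟨_, hd2, rfl⟩
  calc φ d ≤ a * φ ((t₁ / t) • d) + b * φ ((t₂ / t) • d) := hconv2
    _ ≤ a * Mof P φ t₁ + b * Mof P φ t₂ := by
        apply add_le_add
        · exact mul_le_mul_of_nonneg_left hm1 ha
        · exact mul_le_mul_of_nonneg_left hm2 hb
    _ = a • Mof P φ t₁ + b • Mof P φ t₂ := by simp

lemma Mof_continuousAt {t : ℝ} (ht : 0 < t) : ContinuousAt (Mof P φ) t := by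
  have h := (Mof_convexOn hn hP hconv hcont hzero hnn (P := P)).continuousOn_interior
  rw [interior_Ici] at h
  exact h.continuousAt (Ioi_mem_nhds ht)

lemma phi_lt_of_Mof_le {t a : ℝ} (ht : 0 < t) (ha : 0 < a) (hM : Mof P φ t ≤ a)
    {d : Zsp n m} (hd : pnorm P d < t) : φ d < a := by
  rcases eq_or_lt_of_le (pnorm_nonneg d (P := P)) with h0 | h0
  · have hd0 : d = 0 := pnorm_eq_zero hP h0.symm
    rw [hd0, hzero]; exact ha
  · set ν := pnorm P d with hν
    have hd' : pnorm P ((t / ν) • d) = t := by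
      rw [pnorm_smul hP, abs_of_pos (div_pos ht h0)]
      field_simp
      exact hν.symm
    have h1 : φ ((t / ν) • d) ≤ Mof P φ t :=
      le_csSup (bddAbove_image_pball hn hP hcont t) ⟨_, le_of_eq hd', rfl⟩
    have hre : (ν / t) • ((t / ν) • d) = d := by
      rw [smul_smul, div_mul_div_comm, mul_comm ν t, div_self (by positivity), one_smul]
    have h2 : φ d ≤ (ν / t) * φ ((t / ν) • d) := by
      have := phi_smul_le hconv hzero (div_nonneg h0.le ht.le) ((div_le_one ht).2 hd.le)
        ((t / ν) • d)
      rwa [hre] at this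
    have h3 : φ d ≤ (ν / t) * a :=
      h2.trans (mul_le_mul_of_nonneg_left (h1.trans hM) (div_nonneg h0.le ht.le))
    have h4 : ν / t < 1 := (div_lt_one ht).2 hd
    nlinarith

lemma exists_phi_gt {t a : ℝ} (ht : 0 < t) (hM : a < Mof P φ t) :
    ∃ d : Zsp n m, pnorm P d < t ∧ a < φ d := by
  obtain ⟨x, ⟨d, hd, rfl⟩, hax⟩ :=
    exists_lt_of_lt_csSup
      (show (φ '' pball P t).Nonempty from ⟨φ 0, 0, mem_pball_zero hP ht.le, rfl⟩) hM
  rcases lt_or_eq_of_le (show pnorm P d ≤ t from hd) with hlt | heq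
  · exact ⟨d, hlt, hax⟩
  · have hF : Continuous fun s : ℝ => φ (s • d) :=
      hcont.comp (continuous_id.smul continuous_const)
    have h1 : a < φ ((1:ℝ) • d) := by rwa [one_smul]
    have hev : ∀ᶠ s in 𝓝 (1:ℝ), a < φ (s • d) := hF.continuousAt (lt_mem_nhds h1)
    have hIoo : Set.Ioo (0:ℝ) 1 ∈ 𝓝[<] (1:ℝ) :=
      Ioo_mem_nhdsLT_of_mem ⟨by norm_num, le_refl 1⟩
    obtain ⟨s, hs1, hs2⟩ := ((hev.filter_mono nhdsWithin_le_nhds).and hIoo).exists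
    refine ⟨s • d, ?_, hs1⟩
    rw [pnorm_smul hP, abs_of_pos hs2.1, ← heq]
    have := hs2.2
    nlinarith [ht, hs2.1]

end phi

end Stmt12Aux
section Stmt12Glue

lemma ofReal_le_div_iff' {a L t : ℝ} (ha : 0 < a) (hL : 0 ≤ L) (ht : 0 < t) :
    ENNReal.ofReal t ≤ ENNReal.ofReal a / ENNReal.ofReal L ↔ t * L ≤ a := by
  rcases eq_or_lt_of_le hL with rfl | hL'
  · simp only [ENNReal.ofReal_zero,
      ENNReal.div_zero (by simp [ha.le, ha] : ENNReal.ofReal a ≠ 0)]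
    constructor
    · intro _; nlinarith
    · intro _; exact le_top
  · rw [← ENNReal.ofReal_div_of_pos hL',
      ENNReal.ofReal_le_ofReal_iff (by positivity), le_div_iff₀ hL']

lemma div_le_ofReal_iff' {a L t : ℝ} (ha : 0 < a) (hL : 0 ≤ L) (ht : 0 < t) :
    ENNReal.ofReal a / ENNReal.ofReal L ≤ ENNReal.ofReal t ↔ a ≤ t * L := by
  rcases eq_or_lt_of_le hL with rfl | hL'
  · simp only [ENNReal.ofReal_zero,
      ENNReal.div_zero (by simp [ha.le, ha] : ENNReal.ofReal a ≠ 0)]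
    constructor
    · intro h
      exact absurd h (by simp [ENNReal.ofReal_lt_top.ne])
    · intro h; nlinarith
  · rw [← ENNReal.ofReal_div_of_pos hL', ENNReal.ofReal_le_ofReal_iff ht.le,
      div_le_iff₀ hL', mul_comm]

lemma biInf_le_iff_finite {m : ℕ} (s : Set (Fin m)) (F : Fin m → ℝ≥0∞) {c : ℝ≥0∞}
    (hc : c ≠ ⊤) : (⨅ j ∈ s, F j) ≤ c ↔ ∃ j ∈ s, F j ≤ c := by
  constructor
  · intro h
    by_contra hcon
    push_neg at hcon
    have hlt : c < ⨅ j ∈ s, F j := by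
      rcases s.eq_empty_or_nonempty with rfl | hs
      · simp [hc.lt_top]
      · rw [show (⨅ j ∈ s, F j) = ⨅ j : s, F j by rw [iInf_subtype]]
        haveI : Nonempty s := hs.to_subtype
        haveI : Finite s := Subtype.finite
        obtain ⟨⟨j, hj⟩, hjmin⟩ := Finite.exists_min (fun j : s => F j)
        exact (hcon j hj).trans_le (le_iInf fun i => hjmin i)
    exact absurd h hlt.not_ge
  · rintro ⟨j, hj, hle⟩
    exact le_trans (iInf₂_le j hj) hle

lemma max_combo {a b x y z : ℝ} (ha : 0 ≤ a) (hb : 0 ≤ b) (h : z ≤ a * x + b * y) :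
    max z 0 ≤ a * max x 0 + b * max y 0 := by
  apply max_le
  · calc z ≤ a * x + b * y := h
      _ ≤ a * max x 0 + b * max y 0 := by
          apply add_le_add
          · exact mul_le_mul_of_nonneg_left (le_max_left _ _) ha
          · exact mul_le_mul_of_nonneg_left (le_max_left _ _) hb
  · positivity

variable {n m : ℕ} (g : Fin m → (Fin n → ℝ) → ℝ)
  (P : Matrix (Fin n ⊕ Fin m) (Fin n ⊕ Fin m) ℝ) (zstar : Zsp n m)

/-- The shifted primal constraint surplus. -/
def phiX (j : Fin m) : Zsp n m → ℝ :=
  fun d => max (g j (xPart (zstar + d)) - g j (xPart zstar)) 0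

/-- The shifted dual deficiency. -/
def phiY (j : Fin m) : Zsp n m → ℝ :=
  fun d => max (yPart zstar j - yPart (zstar + d) j) 0

lemma Lxbar_eq_Lof (j : Fin m) (t : ℝ) :
    Lxbar g P zstar j t = Lof P (phiX g zstar j) t := by
  unfold Lxbar Lof ratioSet phiX
  congr 1
  ext r
  constructor
  · rintro ⟨w, h1, h2, rfl⟩
    refine ⟨w - zstar, h1, h2, ?_⟩
    rw [add_sub_cancel]
  · rintro ⟨d, h1, h2, rfl⟩
    exact ⟨zstar + d, by rwa [add_sub_cancel_left], by rwa [add_sub_cancel_left],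
      by rw [add_sub_cancel_left]⟩

lemma Lybar_eq_Lof (j : Fin m) (t : ℝ) :
    Lybar P zstar j t = Lof P (phiY zstar j) t := by
  unfold Lybar Lof ratioSet phiY
  congr 1
  ext r
  constructor
  · rintro ⟨w, h1, h2, rfl⟩
    refine ⟨w - zstar, h1, h2, ?_⟩
    rw [add_sub_cancel]
  · rintro ⟨d, h1, h2, rfl⟩
    exact ⟨zstar + d, by rwa [add_sub_cancel_left], by rwa [add_sub_cancel_left],
      by rw [add_sub_cancel_left]⟩

lemma xPart_combo (d1 d2 : Zsp n m) {a b : ℝ} (hab : a + b = 1) :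
    xPart (zstar + (a • d1 + b • d2)) =
      a • (xPart (zstar + d1)) + b • (xPart (zstar + d2)) := by
  ext i
  simp only [xPart, PiLp.add_apply, PiLp.smul_apply, Pi.add_apply, Pi.smul_apply,
    smul_eq_mul]
  linear_combination zstar (Sum.inl i) * hab.symm

lemma phiX_convex {j : Fin m} (hgj : ConvexOn ℝ Set.univ (g j)) :
    ConvexOn ℝ Set.univ (phiX g zstar j) := by
  refine ⟨convex_univ, ?_⟩
  intro d1 _ d2 _ a b ha hb hab
  have hx := xPart_combo zstar d1 d2 hab
  have hgc := hgj.2 (Set.mem_univ (xPart (zstar + d1))) (Set.mem_univ (xPart (zstar + d2)))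
    ha hb hab
  show max (g j (xPart (zstar + (a • d1 + b • d2))) - g j (xPart zstar)) 0 ≤ _
  rw [hx]
  apply max_combo ha hb
  have hc : a * g j (xPart zstar) + b * g j (xPart zstar) = g j (xPart zstar) := by
    rw [← add_mul, hab, one_mul]
  simp only [smul_eq_mul] at hgc
  linarith

lemma g_continuous {j : Fin m} (hgj : ConvexOn ℝ Set.univ (g j)) : Continuous (g j) := by
  exact continuousOn_univ.mp (hgj.continuousOn isOpen_univ)

lemma phiX_continuous {j : Fin m} (hgj : ConvexOn ℝ Set.univ (g j)) :
    Continuous (phiX g zstar j) := by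
  apply Continuous.max _ continuous_const
  apply Continuous.sub _ continuous_const
  apply (g_continuous g hgj).comp
  apply continuous_pi
  intro i
  have h1 : Continuous fun d : Zsp n m => d (Sum.inl i) :=
    (continuous_apply (Sum.inl i)).comp (PiLp.continuous_ofLp 2 _)
  exact continuous_const.add h1

lemma phiX_zero (j : Fin m) : phiX g zstar j 0 = 0 := by
  simp [phiX]

lemma phiX_nonneg (j : Fin m) (d : Zsp n m) : 0 ≤ phiX g zstar j d := le_max_right _ _

lemma phiY_eq (j : Fin m) (d : Zsp n m) :
    phiY zstar j d = max (-(d (Sum.inr j))) 0 := by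
  simp only [phiY, yPart, PiLp.add_apply]
  congr 1
  ring

lemma phiY_convex (j : Fin m) : ConvexOn ℝ Set.univ (phiY (n := n) zstar j) := by
  refine ⟨convex_univ, ?_⟩
  intro d1 _ d2 _ a b ha hb hab
  simp only [phiY_eq, smul_eq_mul]
  apply max_combo ha hb
  simp only [PiLp.add_apply, PiLp.smul_apply, smul_eq_mul]
  ring_nf
  exact le_of_eq (by ring)

lemma phiY_continuous (j : Fin m) : Continuous (phiY (n := n) zstar j) := by
  have h : (phiY (n := n) zstar j) = fun d => max (-(d (Sum.inr j))) 0 := by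
    ext d; exact phiY_eq zstar j d
  rw [h]
  apply Continuous.max _ continuous_const
  exact ((continuous_apply (Sum.inr j)).comp (PiLp.continuous_ofLp 2 _)).neg

lemma phiY_zero (j : Fin m) : phiY (n := n) zstar j 0 = 0 := by
  simp [phiY_eq]

lemma phiY_nonneg (j : Fin m) (d : Zsp n m) : 0 ≤ phiY zstar j d := le_max_right _ _

end Stmt12Glue
section Stmt12Final

variable {n m : ℕ} {g : Fin m → (Fin n → ℝ) → ℝ}
  {P : Matrix (Fin n ⊕ Fin m) (Fin n ⊕ Fin m) ℝ} {zstar : Zsp n m}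

lemma stab_iff (hn : 0 < n) (hP : P.PosDef) (hg : ∀ j, ConvexOn ℝ Set.univ (g j))
    {t : ℝ} (ht : 0 < t) :
    t ∈ stabSet g P zstar ↔
      (∀ j, g j (xPart zstar) < 0 → Mof P (phiX g zstar j) t ≤ -(g j (xPart zstar))) ∧
      (∀ j, g j (xPart zstar) = 0 → 0 < yPart zstar j →
        Mof P (phiY zstar j) t ≤ yPart zstar j) := by
  constructor
  · rintro ⟨-, hstab⟩
    constructor
    · intro j hj
      by_contra hcon
      push_neg at hcon
      obtain ⟨d, hd, hgt⟩ := exists_phi_gt hn hP (phiX_convex g zstar (hg j))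
        (phiX_continuous g zstar (hg j)) (phiX_zero g zstar j) (phiX_nonneg g zstar j)
        ht hcon
      simp only [phiX] at hgt
      have h2 : -(g j (xPart zstar)) < g j (xPart (zstar + d)) - g j (xPart zstar) := by
        rcases lt_max_iff.1 hgt with h | h
        · exact h
        · linarith
      have hw : pnorm P ((zstar + d) - zstar) < t := by rwa [add_sub_cancel_left]
      have := (hstab (zstar + d) hw).1 j hj
      linarith
    · intro j hj hj2
      by_contra hcon
      push_neg at hcon
      obtain ⟨d, hd, hgt⟩ := exists_phi_gt hn hP (phiY_convex zstar j)
        (phiY_continuous zstar j) (phiY_zero zstar j) (phiY_nonneg zstar j) ht hcon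
      simp only [phiY] at hgt
      have h2 : yPart zstar j < yPart zstar j - yPart (zstar + d) j := by
        rcases lt_max_iff.1 hgt with h | h
        · exact h
        · linarith
      have hw : pnorm P ((zstar + d) - zstar) < t := by rwa [add_sub_cancel_left]
      have := (hstab (zstar + d) hw).2 j hj hj2
      linarith
  · rintro ⟨hx, hy⟩
    refine ⟨ht, ?_⟩
    intro w hw
    have hwz : w = zstar + (w - zstar) := by abel
    constructor
    · intro j hj
      have hlt := phi_lt_of_Mof_le hn hP (phiX_convex g zstar (hg j))
        (phiX_continuous g zstar (hg j)) (phiX_zero g zstar j) (phiX_nonneg g zstar j)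
        ht (neg_pos.2 hj) (hx j hj) hw
      have h2 : g j (xPart (zstar + (w - zstar))) - g j (xPart zstar) <
          -(g j (xPart zstar)) := lt_of_le_of_lt (le_max_left _ _) hlt
      rw [← hwz] at h2
      linarith
    · intro j hj hj2
      have hlt := phi_lt_of_Mof_le hn hP (phiY_convex zstar j)
        (phiY_continuous zstar j) (phiY_zero zstar j) (phiY_nonneg zstar j)
        ht hj2 (hy j hj hj2) hw
      have h2 : yPart zstar j - yPart (zstar + (w - zstar)) j < yPart zstar j :=
        lt_of_le_of_lt (le_max_left _ _) hlt
      rw [← hwz] at h2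
      linarith

lemma fix_iff (hn : 0 < n) (hP : P.PosDef) (hg : ∀ j, ConvexOn ℝ Set.univ (g j))
    {t : ℝ} (ht : 0 < t) :
    DeltaFn g P zstar t = ENNReal.ofReal t ↔
      ((∀ j, g j (xPart zstar) < 0 → Mof P (phiX g zstar j) t ≤ -(g j (xPart zstar))) ∧
       (∀ j, g j (xPart zstar) = 0 → 0 < yPart zstar j →
         Mof P (phiY zstar j) t ≤ yPart zstar j)) ∧
      ((∃ j, g j (xPart zstar) < 0 ∧ -(g j (xPart zstar)) ≤ Mof P (phiX g zstar j) t) ∨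
       (∃ j, (g j (xPart zstar) = 0 ∧ 0 < yPart zstar j) ∧
         yPart zstar j ≤ Mof P (phiY zstar j) t)) := by
  have hLxnn : ∀ j, 0 ≤ Lxbar g P zstar j t := fun j => by
    rw [Lxbar_eq_Lof]
    exact Lof_nonneg hn hP (phiX_convex g zstar (hg j)) (phiX_continuous g zstar (hg j))
      (phiX_zero g zstar j) (phiX_nonneg g zstar j) ht
  have hLynn : ∀ j, 0 ≤ Lybar P zstar j t := fun j => by
    rw [Lybar_eq_Lof]
    exact Lof_nonneg hn hP (phiY_convex zstar j) (phiY_continuous zstar j)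
      (phiY_zero zstar j) (phiY_nonneg zstar j) ht
  have hMx : ∀ j, Mof P (phiX g zstar j) t = t * Lxbar g P zstar j t := fun j => by
    rw [Lxbar_eq_Lof]
    exact Mof_eq_mul_Lof hn hP (phiX_convex g zstar (hg j)) (phiX_continuous g zstar (hg j))
      (phiX_zero g zstar j) (phiX_nonneg g zstar j) ht
  have hMy : ∀ j, Mof P (phiY zstar j) t = t * Lybar P zstar j t := fun j => by
    rw [Lybar_eq_Lof]
    exact Mof_eq_mul_Lof hn hP (phiY_convex zstar j) (phiY_continuous zstar j)
      (phiY_zero zstar j) (phiY_nonneg zstar j) ht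
  have key1 : (ENNReal.ofReal t ≤ DeltaFn g P zstar t) ↔
      ((∀ j, g j (xPart zstar) < 0 → Mof P (phiX g zstar j) t ≤ -(g j (xPart zstar))) ∧
       (∀ j, g j (xPart zstar) = 0 → 0 < yPart zstar j →
         Mof P (phiY zstar j) t ≤ yPart zstar j)) := by
    rw [DeltaFn, le_min_iff, le_iInf₂_iff, le_iInf₂_iff]
    apply and_congr
    · apply forall_congr'
      intro j
      constructor
      · intro h hj
        have := (ofReal_le_div_iff' (neg_pos.2 hj) (hLxnn j) ht).1 (h hj)
        rw [hMx j]
        linarith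
      · intro h hj
        refine (ofReal_le_div_iff' (neg_pos.2 hj) (hLxnn j) ht).2 ?_
        have := h hj
        rw [hMx j] at this
        linarith
    · constructor
      · intro h j hj1 hj2
        have := (ofReal_le_div_iff' hj2 (hLynn j) ht).1 (h j ⟨hj1, hj2⟩)
        rw [hMy j]
        linarith
      · intro h j hj
        refine (ofReal_le_div_iff' hj.2 (hLynn j) ht).2 ?_
        have := h j hj.1 hj.2
        rw [hMy j] at this
        linarith
  have key2 : (DeltaFn g P zstar t ≤ ENNReal.ofReal t) ↔
      ((∃ j, g j (xPart zstar) < 0 ∧ -(g j (xPart zstar)) ≤ Mof P (phiX g zstar j) t) ∨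
       (∃ j, (g j (xPart zstar) = 0 ∧ 0 < yPart zstar j) ∧
         yPart zstar j ≤ Mof P (phiY zstar j) t)) := by
    rw [DeltaFn, min_le_iff,
      biInf_le_iff_finite _ _ ENNReal.ofReal_ne_top,
      biInf_le_iff_finite _ _ ENNReal.ofReal_ne_top]
    apply or_congr
    · apply exists_congr
      intro j
      constructor
      · rintro ⟨hj, hle⟩
        refine ⟨hj, ?_⟩
        have := (div_le_ofReal_iff' (neg_pos.2 hj) (hLxnn j) ht).1 hle
        rw [hMx j]
        linarith
      · rintro ⟨hj, hle⟩
        refine ⟨hj, (div_le_ofReal_iff' (neg_pos.2 hj) (hLxnn j) ht).2 ?_⟩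
        rw [hMx j] at hle
        linarith
    · apply exists_congr
      intro j
      constructor
      · rintro ⟨hj, hle⟩
        refine ⟨hj, ?_⟩
        have := (div_le_ofReal_iff' hj.2 (hLynn j) ht).1 hle
        rw [hMy j]
        linarith
      · rintro ⟨hj, hle⟩
        refine ⟨hj, (div_le_ofReal_iff' hj.2 (hLynn j) ht).2 ?_⟩
        rw [hMy j] at hle
        linarith
  rw [le_antisymm_iff, and_comm]
  exact and_congr key1 key2

end Stmt12Final
/-- Lemma: Δ has a unique fixed point. -/
theorem stmt12
    (n m : ℕ) (hn : 0 < n) (hm : 0 < m)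
    (f : (Fin n → ℝ) → ℝ) (g : Fin m → (Fin n → ℝ) → ℝ)
    (hf : ConvexOn ℝ Set.univ f) (hg : ∀ j, ConvexOn ℝ Set.univ (g j))
    (P : Matrix (Fin n ⊕ Fin m) (Fin n ⊕ Fin m) ℝ) (hP : P.PosDef)
    (zstar : Zsp n m)
    -- δ_G is finite
    (hδfin : BddAbove (stabSet g P zstar)) :
    ∃! t : ℝ, 0 < t ∧ DeltaFn g P zstar t = ENNReal.ofReal t := by
  classical
  haveI : Nonempty (Fin m) := ⟨⟨0, hm⟩⟩
  -- shorthand for the two families of sup-functions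
  have hφxp : ∀ j : Fin m, ConvexOn ℝ Set.univ (phiX g zstar j) :=
    fun j => phiX_convex g zstar (hg j)
  have hφxc : ∀ j : Fin m, Continuous (phiX g zstar j) :=
    fun j => phiX_continuous g zstar (hg j)
  have hφyp : ∀ j : Fin m, ConvexOn ℝ Set.univ (phiY (n := n) zstar j) :=
    fun j => phiY_convex zstar j
  have hφyc : ∀ j : Fin m, Continuous (phiY (n := n) zstar j) :=
    fun j => phiY_continuous zstar j
  set cond : ℝ → Prop := fun t =>
    (∀ j, g j (xPart zstar) < 0 → Mof P (phiX g zstar j) t ≤ -(g j (xPart zstar))) ∧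
    (∀ j, g j (xPart zstar) = 0 → 0 < yPart zstar j →
      Mof P (phiY zstar j) t ≤ yPart zstar j) with hconddef
  -- cond is antitone
  have hmono : ∀ t₁ t₂ : ℝ, 0 < t₁ → t₁ ≤ t₂ → cond t₂ → cond t₁ := by
    intro t₁ t₂ h0 h12 ⟨hc1, hc2⟩
    constructor
    · intro j hj
      exact le_trans (Mof_mono hn hP (hφxc j) h0.le h12) (hc1 j hj)
    · intro j hj1 hj2
      exact le_trans (Mof_mono hn hP (hφyc j) h0.le h12) (hc2 j hj1 hj2)
  -- a small radius where cond holds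
  have hsmall : ∃ s : ℝ, 0 < s ∧ s ≤ 1 ∧ cond s := by
    set q : Fin m → ℝ := fun j =>
      min (if g j (xPart zstar) < 0 then
             (-(g j (xPart zstar))) / (Lof P (phiX g zstar j) 1 + 1) else 1)
          (if g j (xPart zstar) = 0 ∧ 0 < yPart zstar j then
             (yPart zstar j) / (Lof P (phiY zstar j) 1 + 1) else 1) with hq
    have hqpos : ∀ j, 0 < q j := by
      intro j
      apply lt_min
      · split_ifs with h
        · apply div_pos (neg_pos.2 h)
          have := Lof_nonneg hn hP (hφxp j) (hφxc j) (phiX_zero g zstar j)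
            (phiX_nonneg g zstar j) one_pos
          linarith
        · norm_num
      · split_ifs with h
        · apply div_pos h.2
          have := Lof_nonneg hn hP (hφyp j) (hφyc j) (phiY_zero zstar j)
            (phiY_nonneg zstar j) one_pos
          linarith
        · norm_num
    set s : ℝ := min 1 (Finset.univ.inf' Finset.univ_nonempty q) with hs
    have hspos : 0 < s :=
      lt_min one_pos ((Finset.lt_inf'_iff _).2 fun j _ => hqpos j)
    have hs1 : s ≤ 1 := min_le_left _ _
    refine ⟨s, hspos, hs1, ?_, ?_⟩
    · intro j hj
      have ha : 0 < -(g j (xPart zstar)) := neg_pos.2 hj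
      have hLnn := Lof_nonneg hn hP (hφxp j) (hφxc j) (phiX_zero g zstar j)
        (phiX_nonneg g zstar j) one_pos
      have hLmono := Lof_mono hn hP (hφxp j) (hφxc j) (phiX_zero g zstar j)
        (phiX_nonneg g zstar j) hspos hs1
      have hMeq := Mof_eq_mul_Lof hn hP (hφxp j) (hφxc j) (phiX_zero g zstar j)
        (phiX_nonneg g zstar j) hspos
      have hsq : s ≤ q j := (min_le_right _ _).trans (Finset.inf'_le _ (Finset.mem_univ j))
      have hsq2 : s ≤ (-(g j (xPart zstar))) / (Lof P (phiX g zstar j) 1 + 1) := by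
        refine hsq.trans ?_
        rw [hq]
        simp only [if_pos hj]
        exact min_le_left _ _
      rw [hMeq]
      set L1 := Lof P (phiX g zstar j) 1
      have h1 : s * Lof P (phiX g zstar j) s ≤ s * L1 :=
        mul_le_mul_of_nonneg_left hLmono hspos.le
      have h2 : s * L1 ≤ ((-(g j (xPart zstar))) / (L1 + 1)) * L1 :=
        mul_le_mul_of_nonneg_right hsq2 hLnn
      have h3 : ((-(g j (xPart zstar))) / (L1 + 1)) * L1 ≤ -(g j (xPart zstar)) := by
        rw [div_mul_eq_mul_div, div_le_iff₀ (by linarith)]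
        nlinarith
      linarith
    · intro j hj1 hj2
      have hLnn := Lof_nonneg hn hP (hφyp j) (hφyc j) (phiY_zero zstar j)
        (phiY_nonneg zstar j) one_pos
      have hLmono := Lof_mono hn hP (hφyp j) (hφyc j) (phiY_zero zstar j)
        (phiY_nonneg zstar j) hspos hs1
      have hMeq := Mof_eq_mul_Lof hn hP (hφyp j) (hφyc j) (phiY_zero zstar j)
        (phiY_nonneg zstar j) hspos
      have hsq : s ≤ q j := (min_le_right _ _).trans (Finset.inf'_le _ (Finset.mem_univ j))
      have hsq2 : s ≤ (yPart zstar j) / (Lof P (phiY zstar j) 1 + 1) := by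
        refine hsq.trans ?_
        rw [hq]
        simp only [if_pos (⟨hj1, hj2⟩ : g j (xPart zstar) = 0 ∧ 0 < yPart zstar j)]
        exact min_le_right _ _
      rw [hMeq]
      set L1 := Lof P (phiY (n := n) zstar j) 1
      have h1 : s * Lof P (phiY (n := n) zstar j) s ≤ s * L1 :=
        mul_le_mul_of_nonneg_left hLmono hspos.le
      have h2 : s * L1 ≤ ((yPart zstar j) / (L1 + 1)) * L1 :=
        mul_le_mul_of_nonneg_right hsq2 hLnn
      have h3 : ((yPart zstar j) / (L1 + 1)) * L1 ≤ yPart zstar j := by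
        rw [div_mul_eq_mul_div, div_le_iff₀ (by linarith)]
        nlinarith
      linarith
  -- a large radius where cond fails
  obtain ⟨bnd, hbnd⟩ := hδfin
  have hbig : ∃ T : ℝ, 0 < T ∧ ¬ cond T := by
    refine ⟨max bnd 0 + 1, by positivity, ?_⟩
    intro hcondT
    have hTpos : (0:ℝ) < max bnd 0 + 1 := by positivity
    have hmem : (max bnd 0 + 1) ∈ stabSet g P zstar :=
      (stab_iff hn hP hg hTpos).2 hcondT
    have h1 := hbnd hmem
    have h2 := le_max_left bnd 0
    linarith
  obtain ⟨s, hs0, hs1, hconds⟩ := hsmall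
  obtain ⟨T, hT0, hTnc⟩ := hbig
  have hsT : s < T := by
    by_contra h
    push_neg at h
    exact hTnc (hmono T s hT0 h hconds)
  set C := {u : ℝ | u ∈ Set.Icc s T ∧ cond u} with hC
  have hCne : C.Nonempty := ⟨s, ⟨le_refl s, hsT.le⟩, hconds⟩
  have hCbdd : BddAbove C := ⟨T, fun u hu => hu.1.2⟩
  set tstar := sSup C with htstar
  have hts : s ≤ tstar := le_csSup hCbdd ⟨⟨le_refl s, hsT.le⟩, hconds⟩
  have htT : tstar ≤ T := csSup_le hCne (fun u hu => hu.1.2)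
  have ht0 : 0 < tstar := lt_of_lt_of_le hs0 hts
  -- cond holds at tstar (left continuity / approximation from below)
  have hcondstar : cond tstar := by
    constructor
    · intro j hj
      by_contra hcon
      push_neg at hcon
      have hca : ContinuousAt (Mof P (phiX g zstar j)) tstar :=
        Mof_continuousAt hn hP (hφxp j) (hφxc j) (phiX_zero g zstar j)
          (phiX_nonneg g zstar j) ht0
      have hev : ∀ᶠ u in 𝓝 tstar, -(g j (xPart zstar)) < Mof P (phiX g zstar j) u :=
        hca.eventually (eventually_gt_nhds hcon)
      rw [Metric.eventually_nhds_iff] at hev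
      obtain ⟨ε, hε, hball⟩ := hev
      obtain ⟨u, huC, hulow⟩ := exists_lt_of_lt_csSup hCne
        (show tstar - ε < tstar by linarith)
      have huts : u ≤ tstar := le_csSup hCbdd huC
      have hud : dist u tstar < ε := by
        rw [Real.dist_eq, abs_lt]
        constructor <;> linarith
      have h1 := hball hud
      have h2 := huC.2.1 j hj
      linarith
    · intro j hj1 hj2
      by_contra hcon
      push_neg at hcon
      have hca : ContinuousAt (Mof P (phiY (n := n) zstar j)) tstar :=
        Mof_continuousAt hn hP (hφyp j) (hφyc j) (phiY_zero zstar j)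
          (phiY_nonneg zstar j) ht0
      have hev : ∀ᶠ u in 𝓝 tstar, yPart zstar j < Mof P (phiY zstar j) u :=
        hca.eventually (eventually_gt_nhds hcon)
      rw [Metric.eventually_nhds_iff] at hev
      obtain ⟨ε, hε, hball⟩ := hev
      obtain ⟨u, huC, hulow⟩ := exists_lt_of_lt_csSup hCne
        (show tstar - ε < tstar by linarith)
      have huts : u ≤ tstar := le_csSup hCbdd huC
      have hud : dist u tstar < ε := by
        rw [Real.dist_eq, abs_lt]
        constructor <;> linarith
      have h1 := hball hud
      have h2 := huC.2.2 j hj1 hj2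
      linarith
  have htsT : tstar < T := lt_of_le_of_ne htT (fun h => hTnc (h ▸ hcondstar))
  -- tightness at tstar
  have htight :
      (∃ j, g j (xPart zstar) < 0 ∧
        -(g j (xPart zstar)) ≤ Mof P (phiX g zstar j) tstar) ∨
      (∃ j, (g j (xPart zstar) = 0 ∧ 0 < yPart zstar j) ∧
        yPart zstar j ≤ Mof P (phiY zstar j) tstar) := by
    by_contra hcon
    push_neg at hcon
    obtain ⟨hc1, hc2⟩ := hcon
    have hev : ∀ᶠ u in 𝓝 tstar, ∀ j : Fin m,
        (g j (xPart zstar) < 0 → Mof P (phiX g zstar j) u < -(g j (xPart zstar))) ∧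
        ((g j (xPart zstar) = 0 ∧ 0 < yPart zstar j) →
          Mof P (phiY zstar j) u < yPart zstar j) := by
      rw [eventually_all]
      intro j
      apply Filter.Eventually.and
      · by_cases hj : g j (xPart zstar) < 0
        · have hca : ContinuousAt (Mof P (phiX g zstar j)) tstar :=
            Mof_continuousAt hn hP (hφxp j) (hφxc j) (phiX_zero g zstar j)
              (phiX_nonneg g zstar j) ht0
          have h1 := hc1 j hj
          have := hca.eventually (eventually_lt_nhds h1)
          exact this.mono (fun u hu _ => hu)
        · exact Filter.Eventually.of_forall (fun u h => absurd h hj)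
      · by_cases hj : g j (xPart zstar) = 0 ∧ 0 < yPart zstar j
        · have hca : ContinuousAt (Mof P (phiY (n := n) zstar j)) tstar :=
            Mof_continuousAt hn hP (hφyp j) (hφyc j) (phiY_zero zstar j)
              (phiY_nonneg zstar j) ht0
          have h1 := hc2 j hj
          have := hca.eventually (eventually_lt_nhds h1)
          exact this.mono (fun u hu _ => hu)
        · exact Filter.Eventually.of_forall (fun u h => absurd h hj)
    obtain ⟨u, hu1, hu2⟩ := ((hev.filter_mono nhdsWithin_le_nhds).and
      (Ioc_mem_nhdsGT_of_mem ⟨le_refl tstar, htsT⟩)).exists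
    have hcondu : cond u := by
      constructor
      · intro j hj
        exact ((hu1 j).1 hj).le
      · intro j hj1 hj2
        exact ((hu1 j).2 ⟨hj1, hj2⟩).le
    have humem : u ∈ C := ⟨⟨hts.trans hu2.1.le, hu2.2⟩, hcondu⟩
    have := le_csSup hCbdd humem
    have := hu2.1
    linarith
  -- the contradiction lemma for uniqueness
  have contra : ∀ t₁ t₂ : ℝ, 0 < t₁ → t₁ < t₂ →
      ((∃ j, g j (xPart zstar) < 0 ∧
          -(g j (xPart zstar)) ≤ Mof P (phiX g zstar j) t₁) ∨
       (∃ j, (g j (xPart zstar) = 0 ∧ 0 < yPart zstar j) ∧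
          yPart zstar j ≤ Mof P (phiY zstar j) t₁)) →
      cond t₂ → False := by
    rintro t₁ t₂ h1 h12 (⟨j, hj, hge⟩ | ⟨j, hj, hge⟩) ⟨hc1, hc2⟩
    · have ha : 0 < -(g j (xPart zstar)) := neg_pos.2 hj
      have hM1 := Mof_eq_mul_Lof hn hP (hφxp j) (hφxc j) (phiX_zero g zstar j)
        (phiX_nonneg g zstar j) h1
      have hM2 := Mof_eq_mul_Lof hn hP (hφxp j) (hφxc j) (phiX_zero g zstar j)
        (phiX_nonneg g zstar j) (h1.trans h12)
      have hLm := Lof_mono hn hP (hφxp j) (hφxc j) (phiX_zero g zstar j)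
        (phiX_nonneg g zstar j) h1 h12.le
      have hle := hc1 j hj
      rw [hM1] at hge
      rw [hM2] at hle
      nlinarith [mul_le_mul_of_nonneg_left hLm h1.le]
    · have ha : 0 < yPart zstar j := hj.2
      have hM1 := Mof_eq_mul_Lof hn hP (hφyp j) (hφyc j) (phiY_zero zstar j)
        (phiY_nonneg zstar j) h1
      have hM2 := Mof_eq_mul_Lof hn hP (hφyp j) (hφyc j) (phiY_zero zstar j)
        (phiY_nonneg zstar j) (h1.trans h12)
      have hLm := Lof_mono hn hP (hφyp j) (hφyc j) (phiY_zero zstar j)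
        (phiY_nonneg zstar j) h1 h12.le
      have hle := hc2 j hj.1 hj.2
      rw [hM1] at hge
      rw [hM2] at hle
      nlinarith [mul_le_mul_of_nonneg_left hLm h1.le]
  refine ⟨tstar, ⟨ht0, (fix_iff hn hP hg ht0).2 ⟨hcondstar, htight⟩⟩, ?_⟩
  rintro t₂ ⟨ht₂, hfix₂⟩
  obtain ⟨hcond₂, htight₂⟩ := (fix_iff hn hP hg ht₂).1 hfix₂
  by_contra hne
  rcases lt_or_gt_of_ne hne with hlt | hlt
  · exact contra t₂ tstar ht₂ hlt htight₂ hcondstar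
  · exact contra tstar t₂ ht0 hlt htight hcond₂
end
end

section
/- Suppose z* = (x*, y*) satisfies g_j(x*) < 0 for every j ∈ N and y*_j > 0 for every j ∈ B_a, and suppose the radius of active-set stability δ_G is finite. Then the unique fixed point δ_A of Δ equals δ_G. -/
noncomputable section

open scoped ENNReal
open Classical Filter Topology

namespace Aux13
variable {n m : ℕ} {P : Matrix (Fin n ⊕ Fin m) (Fin n ⊕ Fin m) ℝ}

def qf (P : Matrix (Fin n ⊕ Fin m) (Fin n ⊕ Fin m) ℝ) (z : Zsp n m) : ℝ :=
  dotProduct (toVec z) (P.mulVec (toVec z))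

lemma pnorm_eq (z : Zsp n m) : pnorm P z = Real.sqrt (qf P z) := rfl

lemma toVec_smul (a : ℝ) (z : Zsp n m) : toVec (a • z) = a • toVec z := rfl

lemma qf_smul (a : ℝ) (z : Zsp n m) : qf P (a • z) = a ^ 2 * qf P z := by
  simp only [qf, toVec_smul, Matrix.mulVec_smul, smul_dotProduct, dotProduct_smul]
  ring_nf

lemma toVec_ne_zero {z : Zsp n m} (hz : z ≠ 0) : toVec z ≠ 0 := by
  intro h
  apply hz
  ext i
  exact congrFun h i

lemma qf_pos (hP : P.PosDef) {z : Zsp n m} (hz : z ≠ 0) : 0 < qf P z := by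
  have := hP.dotProduct_mulVec_pos (toVec_ne_zero hz)
  simpa [qf] using this

lemma qf_zero : qf P (0 : Zsp n m) = 0 := by
  have h : toVec (0 : Zsp n m) = 0 := rfl
  simp [qf, h]

lemma pnorm_nonneg (z : Zsp n m) : 0 ≤ pnorm P z := Real.sqrt_nonneg _

lemma pnorm_pos (hP : P.PosDef) {z : Zsp n m} (hz : z ≠ 0) : 0 < pnorm P z :=
  Real.sqrt_pos.2 (qf_pos hP hz)

lemma eq_of_pnorm_nonpos (hP : P.PosDef) {z : Zsp n m} (h : pnorm P z ≤ 0) : z = 0 := by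
  by_contra hz
  exact absurd h (not_le.2 (pnorm_pos hP hz))

lemma pnorm_smul (a : ℝ) (z : Zsp n m) :
    pnorm P (a • z) = |a| * pnorm P z := by
  rw [pnorm_eq, pnorm_eq, qf_smul, Real.sqrt_mul (sq_nonneg a), Real.sqrt_sq_eq_abs]

lemma continuous_qf : Continuous (qf P : Zsp n m → ℝ) := by
  have hcoord : ∀ i, Continuous fun z : Zsp n m => z i := by
    intro i
    exact (continuous_apply i).comp (PiLp.continuous_ofLp (p := 2) (β := _))
  unfold qf dotProduct Matrix.mulVec toVec
  refine continuous_finset_sum _ fun i _ => ?_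
  exact (hcoord i).mul (continuous_finset_sum _ fun j _ => continuous_const.mul (hcoord j))

lemma coord_le_norm (z : Zsp n m) (i : Fin n ⊕ Fin m) : |z i| ≤ ‖z‖ := by
  rw [EuclideanSpace.norm_eq]
  calc |z i| = Real.sqrt (‖z i‖ ^ 2) := by rw [Real.sqrt_sq_eq_abs]; simp
  _ ≤ _ := by
      apply Real.sqrt_le_sqrt
      exact Finset.single_le_sum (f := fun j => ‖z j‖ ^ 2) (fun j _ => sq_nonneg _)
        (Finset.mem_univ i)

lemma pnorm_equiv (hP : P.PosDef) (hne : Nonempty (Fin n ⊕ Fin m)) :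
    ∃ c > (0:ℝ), ∃ C > (0:ℝ), ∀ z : Zsp n m, c * ‖z‖ ≤ pnorm P z ∧ pnorm P z ≤ C * ‖z‖ := by
  have hnt : Nontrivial (Zsp n m) := by infer_instance
  have hsph : (Metric.sphere (0 : Zsp n m) 1).Nonempty :=
    NormedSpace.sphere_nonempty.2 zero_le_one
  obtain ⟨v, hv, hvmin⟩ := (isCompact_sphere (0 : Zsp n m) 1).exists_isMinOn hsph
    continuous_qf.continuousOn
  obtain ⟨V, hV, hVmax⟩ := (isCompact_sphere (0 : Zsp n m) 1).exists_isMaxOn hsph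
    continuous_qf.continuousOn
  have hv0 : v ≠ 0 := by
    intro h; rw [h] at hv; simp at hv
  have hc0 : 0 < qf P v := qf_pos hP hv0
  refine ⟨Real.sqrt (qf P v), Real.sqrt_pos.2 hc0, Real.sqrt (qf P V),
    Real.sqrt_pos.2 (lt_of_lt_of_le hc0 (hvmin hV)), fun z => ?_⟩
  rcases eq_or_ne z 0 with rfl | hz
  · simp [pnorm_eq, qf_zero]
  · have hnz : 0 < ‖z‖ := norm_pos_iff.2 hz
    have hmem : ‖z‖⁻¹ • z ∈ Metric.sphere (0 : Zsp n m) 1 := by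
      simp [norm_smul, abs_of_pos (inv_pos.2 hnz), inv_mul_cancel₀ hnz.ne']
    have hdecomp : qf P z = ‖z‖ ^ 2 * qf P (‖z‖⁻¹ • z) := by
      rw [← qf_smul]
      congr 1
      rw [smul_smul, mul_inv_cancel₀ hnz.ne', one_smul]
    constructor
    · rw [pnorm_eq, hdecomp, Real.sqrt_mul (sq_nonneg _), Real.sqrt_sq hnz.le, mul_comm]
      gcongr
      exact hvmin hmem
    · rw [pnorm_eq, hdecomp, Real.sqrt_mul (sq_nonneg _), Real.sqrt_sq hnz.le, mul_comm]
      gcongr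
      exact hVmax hmem

variable {g : Fin m → (Fin n → ℝ) → ℝ} {zstar : Zsp n m} {t : ℝ}

lemma sub_self_add (z v : Zsp n m) : (z + v) - z = v := by abel

lemma gj_boundary (hP : P.PosDef) {j : Fin m} (hgc : Continuous (g j))
    (ht : t ∈ stabSet g P zstar) {u : Zsp n m} (hu : pnorm P (u - zstar) ≤ t)
    (hj : g j (xPart zstar) < 0) : g j (xPart u) ≤ 0 := by
  obtain ⟨ht0, hstab⟩ := ht
  have key : ∀ μ ∈ Set.Ioo (0:ℝ) 1, g j (xPart (zstar + μ • (u - zstar))) < 0 := by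
    rintro μ ⟨hμ0, hμ1⟩
    refine (hstab _ ?_).1 j hj
    rw [sub_self_add, Aux13.pnorm_smul, abs_of_nonneg hμ0.le]
    calc μ * pnorm P (u - zstar) ≤ μ * t := by
          exact mul_le_mul_of_nonneg_left hu hμ0.le
    _ < 1 * t := mul_lt_mul_of_pos_right hμ1 ht0
    _ = t := one_mul t
  have hcont : Continuous fun μ : ℝ => g j (xPart (zstar + μ • (u - zstar))) := by
    have heq : (fun μ : ℝ => xPart (zstar + μ • (u - zstar))) =
        fun μ : ℝ => xPart zstar + μ • (xPart u - xPart zstar) := rfl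
    refine hgc.comp ?_
    rw [heq]
    exact continuous_const.add (continuous_id.smul continuous_const)
  have hlim : Filter.Tendsto (fun μ : ℝ => g j (xPart (zstar + μ • (u - zstar))))
      (nhdsWithin 1 (Set.Iio 1)) (nhds (g j (xPart (zstar + (1:ℝ) • (u - zstar))))) :=
    (hcont.tendsto 1).mono_left nhdsWithin_le_nhds
  have hle : g j (xPart (zstar + (1:ℝ) • (u - zstar))) ≤ 0 := by
    refine le_of_tendsto hlim ?_
    filter_upwards [Ioo_mem_nhdsLT_of_mem (Set.mem_Ioc.2 ⟨zero_lt_one, le_refl (1:ℝ)⟩)]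
      with μ hμ
    exact (key μ hμ).le
  have hu1 : zstar + (1:ℝ) • (u - zstar) = u := by module
  rwa [hu1] at hle

lemma yj_boundary (hP : P.PosDef) {j : Fin m}
    (ht : t ∈ stabSet g P zstar) {u : Zsp n m} (hu : pnorm P (u - zstar) ≤ t)
    (hj0 : g j (xPart zstar) = 0) (hjy : 0 < yPart zstar j) : 0 ≤ yPart u j := by
  obtain ⟨ht0, hstab⟩ := ht
  have key : ∀ μ ∈ Set.Ioo (0:ℝ) 1, 0 < yPart (zstar + μ • (u - zstar)) j := by
    rintro μ ⟨hμ0, hμ1⟩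
    refine (hstab _ ?_).2 j hj0 hjy
    rw [sub_self_add, Aux13.pnorm_smul, abs_of_nonneg hμ0.le]
    calc μ * pnorm P (u - zstar) ≤ μ * t := mul_le_mul_of_nonneg_left hu hμ0.le
    _ < 1 * t := mul_lt_mul_of_pos_right hμ1 ht0
    _ = t := one_mul t
  have hcont : Continuous fun μ : ℝ => yPart (zstar + μ • (u - zstar)) j := by
    have heq : (fun μ : ℝ => yPart (zstar + μ • (u - zstar)) j) =
        fun μ : ℝ => yPart zstar j + μ * (yPart u j - yPart zstar j) := rfl
    rw [heq]
    exact continuous_const.add (continuous_id.mul continuous_const)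
  have hlim : Filter.Tendsto (fun μ : ℝ => yPart (zstar + μ • (u - zstar)) j)
      (nhdsWithin 1 (Set.Iio 1)) (nhds (yPart (zstar + (1:ℝ) • (u - zstar)) j)) :=
    (hcont.tendsto 1).mono_left nhdsWithin_le_nhds
  have hle : 0 ≤ yPart (zstar + (1:ℝ) • (u - zstar)) j := by
    refine ge_of_tendsto hlim ?_
    filter_upwards [Ioo_mem_nhdsLT_of_mem (Set.mem_Ioc.2 ⟨zero_lt_one, le_refl (1:ℝ)⟩)]
      with μ hμ
    exact (key μ hμ).le
  have hu1 : zstar + (1:ℝ) • (u - zstar) = u := by module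
  rwa [hu1] at hle

lemma ofReal_le_div {a L t : ℝ} (ha : 0 < a) (ht : 0 < t) (hL : L ≤ a / t) :
    ENNReal.ofReal t ≤ ENNReal.ofReal a / ENNReal.ofReal L := by
  rcases le_or_gt L 0 with h | h
  · rw [ENNReal.ofReal_eq_zero.2 h, ENNReal.div_zero (by simp [ENNReal.ofReal_eq_zero, not_le, ha])]
    exact le_top
  · rw [← ENNReal.ofReal_div_of_pos h]
    apply ENNReal.ofReal_le_ofReal
    rw [le_div_iff₀ h]
    calc t * L ≤ t * (a / t) := mul_le_mul_of_nonneg_left hL ht.le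
    _ = a := by field_simp

lemma false_of_div_le {a L s δ : ℝ} (ha : 0 < a) (hs : 0 < s) (hsδ : s < δ) (hL : a / s ≤ L)
    (hterm : ENNReal.ofReal δ ≤ ENNReal.ofReal a / ENNReal.ofReal L) : False := by
  have hL0 : 0 < L := lt_of_lt_of_le (div_pos ha hs) hL
  rw [← ENNReal.ofReal_div_of_pos hL0] at hterm
  have hδle : δ ≤ a / L := (ENNReal.ofReal_le_ofReal_iff (by positivity)).1 hterm
  have hals : a / L ≤ s := by
    rw [div_le_iff₀ hL0]
    calc a = (a / s) * s := by field_simp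
    _ ≤ L * s := mul_le_mul_of_nonneg_right hL hs.le
    _ = s * L := mul_comm _ _
  linarith

lemma Lxbar_le (hP : P.PosDef) {j : Fin m} (hgj : ConvexOn ℝ Set.univ (g j))
    (ht : t ∈ stabSet g P zstar) {t' : ℝ} (ht'0 : 0 < t') (ht't : t' ≤ t)
    (hj : g j (xPart zstar) < 0) :
    Lxbar g P zstar j t' ≤ -(g j (xPart zstar)) / t := by
  have ht0 : 0 < t := ht.1
  have ha0 : 0 < -(g j (xPart zstar)) := neg_pos.2 hj
  refine Real.sSup_le ?_ (div_nonneg ha0.le ht0.le)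
  rintro r ⟨w, hs0, hst, rfl⟩
  set s := pnorm P (w - zstar) with hs
  have hst2 : s ≤ t := hst.trans ht't
  set u := zstar + (t / s) • (w - zstar) with hu
  have hus : pnorm P (u - zstar) = t := by
    rw [hu, sub_self_add, Aux13.pnorm_smul, abs_of_pos (div_pos ht0 hs0),
      div_mul_cancel₀ _ hs0.ne']
  have hgu : g j (xPart u) ≤ 0 :=
    gj_boundary hP hgj.locallyLipschitz.continuous ht hus.le hj
  have hxu : xPart u = xPart zstar + (t / s) • (xPart w - xPart zstar) := rfl
  have hmul1 : (s / t) * (t / s) = 1 := by field_simp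
  have hxw : xPart w = (1 - s / t) • xPart zstar + (s / t) • xPart u := by
    rw [hxu, smul_add, smul_smul, hmul1, one_smul]
    module
  have h1a : 0 ≤ 1 - s / t := by
    have h1 : s / t ≤ 1 := (div_le_one ht0).2 hst2
    linarith
  have hsum : (1 - s / t) + s / t = 1 := by ring
  have hcvx := hgj.2 (Set.mem_univ (xPart zstar)) (Set.mem_univ (xPart u))
    h1a (div_nonneg hs0.le ht0.le) hsum
  rw [← hxw] at hcvx
  have hprod : (s / t) * g j (xPart u) ≤ 0 :=
    mul_nonpos_of_nonneg_of_nonpos (div_nonneg hs0.le ht0.le) hgu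
  have hd : g j (xPart w) - g j (xPart zstar) ≤ -(g j (xPart zstar)) * s / t := by
    have h2 : g j (xPart w) ≤ (1 - s / t) * g j (xPart zstar) + (s / t) * g j (xPart u) := by
      simpa [smul_eq_mul] using hcvx
    have h3 : (1 - s / t) * g j (xPart zstar) - g j (xPart zstar) =
        -(g j (xPart zstar)) * s / t := by ring
    linarith
  have hmax : max (g j (xPart w) - g j (xPart zstar)) 0 ≤ -(g j (xPart zstar)) * s / t :=
    max_le hd (div_nonneg (mul_nonneg ha0.le hs0.le) ht0.le)
  rw [div_le_div_iff₀ hs0 ht0]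
  calc max (g j (xPart w) - g j (xPart zstar)) 0 * t
      ≤ (-(g j (xPart zstar)) * s / t) * t := mul_le_mul_of_nonneg_right hmax ht0.le
  _ = -(g j (xPart zstar)) * s := by field_simp

lemma Lybar_le (hP : P.PosDef) {j : Fin m}
    (ht : t ∈ stabSet g P zstar) {t' : ℝ} (ht'0 : 0 < t') (ht't : t' ≤ t)
    (hj0 : g j (xPart zstar) = 0) (hjy : 0 < yPart zstar j) :
    Lybar P zstar j t' ≤ yPart zstar j / t := by
  have ht0 : 0 < t := ht.1
  refine Real.sSup_le ?_ (div_nonneg hjy.le ht0.le)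
  rintro r ⟨w, hs0, hst, rfl⟩
  set s := pnorm P (w - zstar) with hs
  have hst2 : s ≤ t := hst.trans ht't
  set u := zstar + (t / s) • (w - zstar) with hu
  have hus : pnorm P (u - zstar) = t := by
    rw [hu, sub_self_add, Aux13.pnorm_smul, abs_of_pos (div_pos ht0 hs0),
      div_mul_cancel₀ _ hs0.ne']
  have hyu : 0 ≤ yPart u j := yj_boundary hP ht hus.le hj0 hjy
  have hyu' : yPart u j = yPart zstar j + (t / s) * (yPart w j - yPart zstar j) := rfl
  have hmul1 : (s / t) * (t / s) = 1 := by field_simp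
  have h10 : (s / t) * ((t / s) * (yPart w j - yPart zstar j)) =
      yPart w j - yPart zstar j := by
    rw [← mul_assoc, hmul1, one_mul]
  have h9 : 0 ≤ (s / t) * yPart u j :=
    mul_nonneg (div_nonneg hs0.le ht0.le) hyu
  rw [hyu', mul_add, h10] at h9
  have h8 : yPart zstar j - yPart w j ≤ yPart zstar j * s / t := by
    have h11 : (s / t) * yPart zstar j = yPart zstar j * s / t := by ring
    linarith
  have hmax : max (yPart zstar j - yPart w j) 0 ≤ yPart zstar j * s / t :=
    max_le h8 (div_nonneg (mul_nonneg hjy.le hs0.le) ht0.le)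
  rw [div_le_div_iff₀ hs0 ht0]
  calc max (yPart zstar j - yPart w j) 0 * t
      ≤ (yPart zstar j * s / t) * t := mul_le_mul_of_nonneg_right hmax ht0.le
  _ = yPart zstar j * s := by field_simp

lemma piNorm_xPart_le (v : Zsp n m) : ‖xPart v‖ ≤ ‖v‖ := by
  refine (pi_norm_le_iff_of_nonneg (norm_nonneg v)).2 fun i => ?_
  simpa [xPart, Real.norm_eq_abs] using Aux13.coord_le_norm v (Sum.inl i)

lemma bddX (hP : P.PosDef) (hne : Nonempty (Fin n ⊕ Fin m)) {j : Fin m}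
    (hgj : ConvexOn ℝ Set.univ (g j)) (t : ℝ) :
    BddAbove {r : ℝ | ∃ w : Zsp n m, 0 < pnorm P (w - zstar) ∧ pnorm P (w - zstar) ≤ t ∧
      r = max (g j (xPart w) - g j (xPart zstar)) 0 / pnorm P (w - zstar)} := by
  obtain ⟨c, hc, C, hC, hcC⟩ := pnorm_equiv hP hne
  set R : ℝ := |t| / c + 1 with hR'
  have hR : 0 < R := by positivity
  have hcont : Continuous (g j) := hgj.locallyLipschitz.continuous
  have hbd : Bornology.IsBounded (g j '' Metric.ball (xPart zstar) (R + 1)) := by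
    refine (((isCompact_closedBall (xPart zstar) (R + 1)).image hcont).isBounded).subset ?_
    exact Set.image_mono Metric.ball_subset_closedBall
  obtain ⟨K, hK⟩ := ConvexOn.exists_lipschitzOnWith_of_isBounded
    (hgj.subset (Set.subset_univ _) (convex_ball _ _)) (lt_add_one R) hbd
  refine ⟨(K : ℝ) / c, ?_⟩
  rintro r ⟨w, hs0, hst, rfl⟩
  set s := pnorm P (w - zstar) with hs
  have hsc : ‖w - zstar‖ ≤ s / c := by
    rw [le_div_iff₀ hc, mul_comm]
    exact (hcC (w - zstar)).1
  have hpi : dist (xPart w) (xPart zstar) ≤ ‖w - zstar‖ := by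
    rw [dist_eq_norm]
    have hxx : xPart w - xPart zstar = xPart (w - zstar) := rfl
    rw [hxx]
    exact piNorm_xPart_le (w - zstar)
  have hmemw : xPart w ∈ Metric.ball (xPart zstar) R := by
    rw [Metric.mem_ball]
    have h1 : s / c ≤ |t| / c := by
      gcongr
      exact hst.trans (le_abs_self t)
    have h2 : dist (xPart w) (xPart zstar) ≤ |t| / c := hpi.trans (hsc.trans h1)
    rw [hR']
    linarith
  have hmemz : xPart zstar ∈ Metric.ball (xPart zstar) R := by
    simpa using hR
  have hd : g j (xPart w) - g j (xPart zstar) ≤ (K : ℝ) * (s / c) := by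
    calc g j (xPart w) - g j (xPart zstar)
        ≤ |g j (xPart w) - g j (xPart zstar)| := le_abs_self _
    _ = dist (g j (xPart w)) (g j (xPart zstar)) := (Real.dist_eq _ _).symm
    _ ≤ (K : ℝ) * dist (xPart w) (xPart zstar) := hK.dist_le_mul _ hmemw _ hmemz
    _ ≤ (K : ℝ) * (s / c) := mul_le_mul_of_nonneg_left (hpi.trans hsc) K.coe_nonneg
  have hmax : max (g j (xPart w) - g j (xPart zstar)) 0 ≤ (K : ℝ) * (s / c) :=
    max_le hd (mul_nonneg K.coe_nonneg (div_nonneg (Aux13.pnorm_nonneg _) hc.le))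
  rw [div_le_iff₀ hs0]
  calc max (g j (xPart w) - g j (xPart zstar)) 0 ≤ (K : ℝ) * (s / c) := hmax
  _ = (K : ℝ) / c * s := by ring

lemma bddY (hP : P.PosDef) (hne : Nonempty (Fin n ⊕ Fin m)) {j : Fin m} (t : ℝ) :
    BddAbove {r : ℝ | ∃ w : Zsp n m, 0 < pnorm P (w - zstar) ∧ pnorm P (w - zstar) ≤ t ∧
      r = max (yPart zstar j - yPart w j) 0 / pnorm P (w - zstar)} := by
  obtain ⟨c, hc, C, hC, hcC⟩ := pnorm_equiv hP hne
  refine ⟨1 / c, ?_⟩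
  rintro r ⟨w, hs0, hst, rfl⟩
  set s := pnorm P (w - zstar) with hs
  have hsc : ‖w - zstar‖ ≤ s / c := by
    rw [le_div_iff₀ hc, mul_comm]
    exact (hcC (w - zstar)).1
  have hyy : yPart zstar j - yPart w j ≤ s / c := by
    have h1 : yPart zstar j - yPart w j ≤ |(w - zstar) (Sum.inr j)| := by
      have h2 : (w - zstar) (Sum.inr j) = yPart w j - yPart zstar j := rfl
      rw [h2, abs_sub_comm]
      exact le_abs_self _
    exact h1.trans ((Aux13.coord_le_norm _ _).trans hsc)
  have hmax : max (yPart zstar j - yPart w j) 0 ≤ s / c :=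
    max_le hyy (div_nonneg (Aux13.pnorm_nonneg _) hc.le)
  rw [div_le_iff₀ hs0]
  calc max (yPart zstar j - yPart w j) 0 ≤ s / c := hmax
  _ = 1 / c * s := by ring

lemma mem_stab (hP : P.PosDef) (hg : ∀ j, ConvexOn ℝ Set.univ (g j))
    (hne : Nonempty (Fin n ⊕ Fin m)) {δA : ℝ} (hδA : 0 < δA)
    (hfix : DeltaFn g P zstar δA = ENNReal.ofReal δA) :
    δA ∈ stabSet g P zstar := by
  refine ⟨hδA, fun w hw => ⟨fun j hj => ?_, fun j hj0 hjy => ?_⟩⟩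
  · rcases le_or_gt (pnorm P (w - zstar)) 0 with h0 | hs0
    · have hwz : w = zstar := by
        have := Aux13.eq_of_pnorm_nonpos hP h0
        rwa [sub_eq_zero] at this
      rw [hwz]; exact hj
    · by_contra hcon
      push_neg at hcon
      set a := -(g j (xPart zstar)) with ha
      have ha0 : 0 < a := neg_pos.2 hj
      set s := pnorm P (w - zstar) with hs
      have hmem : max (g j (xPart w) - g j (xPart zstar)) 0 / s ∈
          {r : ℝ | ∃ w' : Zsp n m, 0 < pnorm P (w' - zstar) ∧ pnorm P (w' - zstar) ≤ δA ∧
            r = max (g j (xPart w') - g j (xPart zstar)) 0 / pnorm P (w' - zstar)} :=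
        ⟨w, hs0, hw.le, rfl⟩
      have hrL : max (g j (xPart w) - g j (xPart zstar)) 0 / s ≤ Lxbar g P zstar j δA :=
        le_csSup (bddX hP hne (hg j) δA) hmem
      have had : a ≤ max (g j (xPart w) - g j (xPart zstar)) 0 :=
        le_max_of_le_left (by rw [ha]; linarith)
      have hr_ge : a / s ≤ max (g j (xPart w) - g j (xPart zstar)) 0 / s :=
        (div_le_div_iff_of_pos_right hs0).2 had
      have hterm : ENNReal.ofReal δA ≤
          ENNReal.ofReal a / ENNReal.ofReal (Lxbar g P zstar j δA) := by
        calc ENNReal.ofReal δA = DeltaFn g P zstar δA := hfix.symm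
        _ ≤ ⨅ j' ∈ {j' : Fin m | g j' (xPart zstar) < 0},
              ENNReal.ofReal (-(g j' (xPart zstar))) /
                ENNReal.ofReal (Lxbar g P zstar j' δA) := min_le_left _ _
        _ ≤ _ := iInf₂_le j hj
      exact false_of_div_le ha0 hs0 hw (hr_ge.trans hrL) hterm
  · rcases le_or_gt (pnorm P (w - zstar)) 0 with h0 | hs0
    · have hwz : w = zstar := by
        have := Aux13.eq_of_pnorm_nonpos hP h0
        rwa [sub_eq_zero] at this
      rw [hwz]; exact hjy
    · by_contra hcon
      push_neg at hcon
      set b := yPart zstar j with hb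
      set s := pnorm P (w - zstar) with hs
      have hmem : max (yPart zstar j - yPart w j) 0 / s ∈
          {r : ℝ | ∃ w' : Zsp n m, 0 < pnorm P (w' - zstar) ∧ pnorm P (w' - zstar) ≤ δA ∧
            r = max (yPart zstar j - yPart w' j) 0 / pnorm P (w' - zstar)} :=
        ⟨w, hs0, hw.le, rfl⟩
      have hrL : max (yPart zstar j - yPart w j) 0 / s ≤ Lybar P zstar j δA :=
        le_csSup (bddY hP hne δA) hmem
      have hbd : b ≤ max (yPart zstar j - yPart w j) 0 :=
        le_max_of_le_left (by linarith)
      have hr_ge : b / s ≤ max (yPart zstar j - yPart w j) 0 / s :=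
        (div_le_div_iff_of_pos_right hs0).2 hbd
      have hterm : ENNReal.ofReal δA ≤
          ENNReal.ofReal b / ENNReal.ofReal (Lybar P zstar j δA) := by
        calc ENNReal.ofReal δA = DeltaFn g P zstar δA := hfix.symm
        _ ≤ ⨅ j' ∈ {j' : Fin m | g j' (xPart zstar) = 0 ∧ 0 < yPart zstar j'},
              ENNReal.ofReal (yPart zstar j') /
                ENNReal.ofReal (Lybar P zstar j' δA) := min_le_right _ _
        _ ≤ _ := iInf₂_le j ⟨hj0, hjy⟩
      exact false_of_div_le hjy hs0 hw (hr_ge.trans hrL) hterm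

end Aux13

theorem stmt13'
    (n m : ℕ) (hn : 0 < n) (hm : 0 < m)
    (f : (Fin n → ℝ) → ℝ) (g : Fin m → (Fin n → ℝ) → ℝ)
    (hf : ConvexOn ℝ Set.univ f) (hg : ∀ j, ConvexOn ℝ Set.univ (g j))
    (P : Matrix (Fin n ⊕ Fin m) (Fin n ⊕ Fin m) ℝ) (hP : P.PosDef)
    (zstar : Zsp n m)
    (hδfin : BddAbove (stabSet g P zstar))
    (δA : ℝ) (hδA : 0 < δA) (hfix : DeltaFn g P zstar δA = ENNReal.ofReal δA) :
    δA = deltaG g P zstar := by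
  have hne : Nonempty (Fin n ⊕ Fin m) := ⟨Sum.inl ⟨0, hn⟩⟩
  have hmem : δA ∈ stabSet g P zstar := Aux13.mem_stab hP hg hne hδA hfix
  refine le_antisymm (le_csSup hδfin hmem) (csSup_le ⟨δA, hmem⟩ fun t ht => ?_)
  by_contra hlt
  push_neg at hlt
  have ht0 : 0 < t := ht.1
  have hA : ENNReal.ofReal t ≤
      ⨅ j ∈ {j : Fin m | g j (xPart zstar) < 0},
        ENNReal.ofReal (-(g j (xPart zstar))) / ENNReal.ofReal (Lxbar g P zstar j δA) := by
    refine le_iInf₂ fun j hj => ?_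
    exact Aux13.ofReal_le_div (neg_pos.2 hj) ht0
      (Aux13.Lxbar_le hP (hg j) ht hδA hlt.le hj)
  have hB : ENNReal.ofReal t ≤
      ⨅ j ∈ {j : Fin m | g j (xPart zstar) = 0 ∧ 0 < yPart zstar j},
        ENNReal.ofReal (yPart zstar j) / ENNReal.ofReal (Lybar P zstar j δA) := by
    refine le_iInf₂ fun j hj => ?_
    exact Aux13.ofReal_le_div hj.2 ht0
      (Aux13.Lybar_le hP ht hδA hlt.le hj.1 hj.2)
  have hmin : ENNReal.ofReal t ≤ DeltaFn g P zstar δA := le_min hA hB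
  rw [hfix] at hmin
  have htle := (ENNReal.ofReal_le_ofReal_iff hδA.le).1 hmin
  linarith

/-- Proposition: the fixed point δ_A of Δ equals δ_G. -/
theorem stmt13
    (n m : ℕ) (hn : 0 < n) (hm : 0 < m)
    (f : (Fin n → ℝ) → ℝ) (g : Fin m → (Fin n → ℝ) → ℝ)
    (hf : ConvexOn ℝ Set.univ f) (hg : ∀ j, ConvexOn ℝ Set.univ (g j))
    (P : Matrix (Fin n ⊕ Fin m) (Fin n ⊕ Fin m) ℝ) (hP : P.PosDef)
    (zstar : Zsp n m)
    -- δ_G is finite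
    (hδfin : BddAbove (stabSet g P zstar))
    (δA : ℝ) (hδA : 0 < δA) (hfix : DeltaFn g P zstar δA = ENNReal.ofReal δA) :
    δA = deltaG g P zstar :=
  stmt13' n m hn hm f g hf hg P hP zstar hδfin δA hδA hfix
end
end

section
/- Suppose z* = (x*, y*) satisfies f(x*) − h(y*) ≤ 0, G(x*) ≤ 0 componentwise and y* ≥ 0 componentwise, that g_j(x*) < 0 for every j ∈ N and y*_j > 0 for every j ∈ B_a, that the radius of active-set stability δ_G is finite, and let δ_A be the unique fixed point of Δ. Then every z = (x, y) ∈ S*_L with ‖z − z*‖_P < δ_A satisfies g_j(x) ≤ 0 for every j ∈ {1, …, m}; consequently z satisfies f(x) − h(y) ≤ 0, G(x) ≤ 0 componentwise and y ≥ 0 componentwise, i.e. z is a primal-dual solution of the full problem. -/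
noncomputable section

open scoped ENNReal
open Classical Filter Topology

namespace Aux17

variable {n m : ℕ}

lemma qscale (P : Matrix (Fin n ⊕ Fin m) (Fin n ⊕ Fin m) ℝ) (b : ℝ) (x : Zsp n m) :
    dotProduct (toVec (b • x)) (P.mulVec (toVec (b • x)))
      = b * (b * dotProduct (toVec x) (P.mulVec (toVec x))) := by
  have h : toVec (b • x) = b • toVec x := rfl
  rw [h, Matrix.mulVec_smul, dotProduct_smul, smul_dotProduct]
  simp [smul_eq_mul]

lemma coercive (hn : 0 < n) {P : Matrix (Fin n ⊕ Fin m) (Fin n ⊕ Fin m) ℝ}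
    (hP : P.PosDef) : ∃ c > 0, ∀ v : Zsp n m, c * ‖v‖ ≤ pnorm P v := by
  set q : Zsp n m → ℝ := fun v => dotProduct (toVec v) (P.mulVec (toVec v)) with hq
  have hcont : Continuous q := by
    have h1 : ∀ i, Continuous fun v : Zsp n m => (v i : ℝ) :=
      fun i => (EuclideanSpace.proj i).continuous
    simp only [hq, dotProduct, Matrix.mulVec, toVec]
    exact continuous_finset_sum _ fun i _ => (h1 i).mul
      (continuous_finset_sum _ fun j _ => (continuous_const.mul (h1 j)))
  have hS : IsCompact (Metric.sphere (0 : Zsp n m) 1) := isCompact_sphere _ _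
  have hne : (Metric.sphere (0 : Zsp n m) 1).Nonempty := by
    refine ⟨EuclideanSpace.single (Sum.inl ⟨0, hn⟩) (1 : ℝ), ?_⟩
    rw [mem_sphere_zero_iff_norm, EuclideanSpace.norm_single]
    norm_num
  obtain ⟨w, hwS, hwmin⟩ := hS.exists_isMinOn hne hcont.continuousOn
  have hw0 : w ≠ 0 := by
    intro h
    rw [mem_sphere_zero_iff_norm, h, norm_zero] at hwS
    norm_num at hwS
  have hcmin : 0 < q w := by
    have h2 := hP.dotProduct_mulVec_pos (x := toVec w) (by
      intro hc
      exact hw0 (PiLp.ext fun i => congrFun hc i))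
    simpa using h2
  refine ⟨Real.sqrt (q w), Real.sqrt_pos.mpr hcmin, fun v => ?_⟩
  by_cases hv : v = 0
  · have : q v = 0 := by
      have h0 : toVec v = 0 := funext fun i => by simp [toVec, hv]
      simp [hq, h0]
    simp [pnorm, hv, ← hq, this]
  · have ha : (0:ℝ) < ‖v‖ := norm_pos_iff.mpr hv
    set u : Zsp n m := ‖v‖⁻¹ • v with hu
    have huS : u ∈ Metric.sphere (0 : Zsp n m) 1 := by
      rw [mem_sphere_zero_iff_norm, hu, norm_smul]
      simp [abs_of_pos (inv_pos.mpr ha), inv_mul_cancel₀ (ne_of_gt ha)]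
    have hqu : q w ≤ q u := isMinOn_iff.mp hwmin u huS
    have hvu : v = ‖v‖ • u := by rw [hu, smul_smul, mul_inv_cancel₀ (ne_of_gt ha), one_smul]
    have hqv : q v = ‖v‖ * (‖v‖ * q u) := by
      have := qscale P ‖v‖ u
      rw [← hvu] at this
      exact this
    have hlow : q w * ‖v‖ ^ 2 ≤ q v := by
      rw [hqv]; nlinarith [sq_nonneg ‖v‖]
    have : Real.sqrt (q w * ‖v‖ ^ 2) ≤ pnorm P v := Real.sqrt_le_sqrt hlow
    rwa [Real.sqrt_mul (le_of_lt hcmin), Real.sqrt_sq (norm_nonneg v)] at this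

lemma norm_xPart_le (v : Zsp n m) : ‖xPart v‖ ≤ ‖v‖ := by
  rw [pi_norm_le_iff_of_nonneg (norm_nonneg v)]
  intro i
  have h1 : ‖v (Sum.inl i)‖ ^ 2 ≤ ∑ j, ‖v j‖ ^ 2 :=
    Finset.single_le_sum (f := fun j => ‖v j‖ ^ 2) (fun j _ => sq_nonneg _)
      (Finset.mem_univ _)
  have := Real.sqrt_le_sqrt h1
  rwa [Real.sqrt_sq (norm_nonneg _), ← EuclideanSpace.norm_eq] at this

lemma xPart_sub (w z : Zsp n m) : xPart w - xPart z = xPart (w - z) := rfl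

end Aux17

namespace Aux17

lemma lx_bdd {n m : ℕ} (hn : 0 < n) (gj : (Fin n → ℝ) → ℝ) (hgj : ConvexOn ℝ Set.univ gj)
    {P : Matrix (Fin n ⊕ Fin m) (Fin n ⊕ Fin m) ℝ} (hP : P.PosDef)
    (zstar : Zsp n m) (t : ℝ) (ht : 0 < t) :
    BddAbove {r : ℝ | ∃ w : Zsp n m, 0 < pnorm P (w - zstar) ∧ pnorm P (w - zstar) ≤ t ∧
      r = max (gj (xPart w) - gj (xPart zstar)) 0 / pnorm P (w - zstar)} := by
  obtain ⟨c, hc, hcle⟩ := coercive (m := m) hn hP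
  have hLL := hgj.locallyLipschitz
  obtain ⟨K, s, hs, hK⟩ := hLL (xPart zstar)
  obtain ⟨ε, hε, hball⟩ := Metric.mem_nhds_iff.mp hs
  have hxc : Continuous (fun w : Zsp n m => xPart w) :=
    continuous_pi fun i => (EuclideanSpace.proj (Sum.inl i)).continuous
  have hgc : Continuous fun w : Zsp n m => gj (xPart w) := (hLL.continuous).comp hxc
  obtain ⟨w0, _, hw0max⟩ := (isCompact_closedBall zstar (t / c)).exists_isMaxOn
    ⟨zstar, Metric.mem_closedBall_self (by positivity)⟩ hgc.continuousOn
  set M : ℝ := gj (xPart w0) with hM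
  set M' : ℝ := max (M - gj (xPart zstar)) 0 with hM'
  have hM'0 : 0 ≤ M' := le_max_right _ _
  refine ⟨max ((K : ℝ) / c) (M' / (c * ε)), ?_⟩
  rintro r ⟨w, hp0, hpt, rfl⟩
  have hwz : c * ‖w - zstar‖ ≤ pnorm P (w - zstar) := hcle _
  have hxle : ‖xPart w - xPart zstar‖ ≤ ‖w - zstar‖ := by
    rw [xPart_sub]; exact norm_xPart_le _
  rcases lt_or_ge ‖w - zstar‖ ε with hcase | hcase
  · have hxm : xPart w ∈ s := hball (by
      rw [Metric.mem_ball, dist_eq_norm]; exact lt_of_le_of_lt hxle hcase)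
    have hxm0 : xPart zstar ∈ s := hball (Metric.mem_ball_self hε)
    have hd := hK.dist_le_mul _ hxm _ hxm0
    rw [dist_eq_norm, dist_eq_norm] at hd
    have h1 : gj (xPart w) - gj (xPart zstar) ≤ (K : ℝ) * ‖w - zstar‖ := by
      have habs : gj (xPart w) - gj (xPart zstar) ≤ ‖gj (xPart w) - gj (xPart zstar)‖ := by
        rw [Real.norm_eq_abs]; exact le_abs_self _
      exact habs.trans (hd.trans (mul_le_mul_of_nonneg_left hxle K.2))
    have h2 : (K : ℝ) * ‖w - zstar‖ ≤ (K : ℝ) / c * pnorm P (w - zstar) := by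
      rw [div_mul_eq_mul_div, le_div_iff₀ hc]
      calc (K : ℝ) * ‖w - zstar‖ * c = (K : ℝ) * (c * ‖w - zstar‖) := by ring
        _ ≤ (K : ℝ) * pnorm P (w - zstar) := mul_le_mul_of_nonneg_left hwz K.2
    have hmaxle : max (gj (xPart w) - gj (xPart zstar)) 0 ≤ (K : ℝ) / c * pnorm P (w - zstar) :=
      max_le (h1.trans h2) (by positivity)
    refine le_trans ?_ (le_max_left _ _)
    rw [div_le_iff₀ hp0]
    exact hmaxle
  · have hcε : c * ε ≤ pnorm P (w - zstar) :=
      le_trans (mul_le_mul_of_nonneg_left hcase (le_of_lt hc)) hwz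
    have hmem : w ∈ Metric.closedBall zstar (t / c) := by
      rw [Metric.mem_closedBall, dist_eq_norm]
      rw [le_div_iff₀ hc] at *
      calc ‖w - zstar‖ * c = c * ‖w - zstar‖ := by ring
        _ ≤ pnorm P (w - zstar) := hwz
        _ ≤ t := hpt
    have hgM : gj (xPart w) ≤ M := isMaxOn_iff.mp hw0max w hmem
    have hmaxle : max (gj (xPart w) - gj (xPart zstar)) 0 ≤ M' :=
      max_le (le_trans (by linarith) (le_max_left _ _)) hM'0
    refine le_trans ?_ (le_max_right _ _)
    exact div_le_div₀ hM'0 hmaxle (by positivity) hcε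

end Aux17

/-- Lemma: points of S*_L near z* solve the full problem. -/
theorem stmt17
    (n m : ℕ) (hn : 0 < n) (hm : 0 < m)
    (f : (Fin n → ℝ) → ℝ) (g : Fin m → (Fin n → ℝ) → ℝ)
    (hf : ConvexOn ℝ Set.univ f) (hg : ∀ j, ConvexOn ℝ Set.univ (g j))
    (P : Matrix (Fin n ⊕ Fin m) (Fin n ⊕ Fin m) ℝ) (hP : P.PosDef)
    (zstar : Zsp n m)
    -- z* is a primal-dual solution of the full problem
    (hgap : ((f (xPart zstar) : ℝ) : EReal) ≤ hdualFn f g (yPart zstar))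
    (hfeas : ∀ j : Fin m, g j (xPart zstar) ≤ 0)
    (hdfeas : ∀ j : Fin m, 0 ≤ yPart zstar j)
    -- δ_G is finite
    (hδfin : BddAbove (stabSet g P zstar))
    -- δ_A is the fixed point of Δ
    (δA : ℝ) (hδA : 0 < δA) (hfix : DeltaFn g P zstar δA = ENNReal.ofReal δA) :
    ∀ z : Zsp n m, z ∈ SstarL f g zstar → pnorm P (z - zstar) < δA →
      (∀ j : Fin m, g j (xPart z) ≤ 0) ∧
      ((f (xPart z) : ℝ) : EReal) ≤ hdualFn f g (yPart z) ∧
      (∀ j : Fin m, 0 ≤ yPart z j) := by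
  intro z hz hlt
  obtain ⟨hzgap, hzB, hzy⟩ := hz
  refine ⟨?_, hzgap, hzy⟩
  intro j
  rcases lt_or_eq_of_le (hfeas j) with hjneg | hjzero
  · obtain ⟨c, hc, hcle⟩ := Aux17.coercive (m := m) hn hP
    have ht0 : 0 ≤ pnorm P (z - zstar) := Real.sqrt_nonneg _
    rcases eq_or_lt_of_le ht0 with ht0eq | ht0pos
    · have h1 : c * ‖z - zstar‖ ≤ 0 := (hcle _).trans (le_of_eq ht0eq.symm)
      have h2 : ‖z - zstar‖ = 0 := le_antisymm (by nlinarith [norm_nonneg (z - zstar)])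
        (norm_nonneg _)
      have hzz : z = zstar := sub_eq_zero.mp (norm_eq_zero.mp h2)
      rw [hzz]
      exact le_of_lt hjneg
    · set t0 := pnorm P (z - zstar) with ht0def
      set L := Lxbar g P zstar j δA with hLdef
      have hbdd := Aux17.lx_bdd (m := m) hn (g j) (hg j) hP zstar δA hδA
      have hrL : max (g j (xPart z) - g j (xPart zstar)) 0 / t0 ≤ L :=
        le_csSup hbdd ⟨z, ht0pos, le_of_lt hlt, rfl⟩
      have hr0 : 0 ≤ max (g j (xPart z) - g j (xPart zstar)) 0 / t0 :=
        div_nonneg (le_max_right _ _) (le_of_lt ht0pos)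
      have hL0 : 0 ≤ L := le_trans hr0 hrL
      have hkey : max (g j (xPart z) - g j (xPart zstar)) 0 ≤ L * t0 :=
        (div_le_iff₀ ht0pos).mp hrL
      have hgle : g j (xPart z) - g j (xPart zstar) ≤ L * t0 :=
        (le_max_left _ _).trans hkey
      rcases eq_or_lt_of_le hL0 with hLeq | hLpos
      · have : L * t0 = 0 := by rw [← hLeq, zero_mul]
        linarith
      · have hfix1 : ENNReal.ofReal δA ≤
            ENNReal.ofReal (-(g j (xPart zstar))) / ENNReal.ofReal L := by
          rw [← hfix]
          exact le_trans (min_le_left _ _) (iInf₂_le j hjneg)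
        have hLne : ENNReal.ofReal L ≠ 0 := by
          rw [ne_eq, ENNReal.ofReal_eq_zero]
          exact not_le.mpr hLpos
        have h2 : ENNReal.ofReal δA * ENNReal.ofReal L ≤
            ENNReal.ofReal (-(g j (xPart zstar))) :=
          (ENNReal.le_div_iff_mul_le (Or.inl hLne) (Or.inl ENNReal.ofReal_ne_top)).mp hfix1
        rw [← ENNReal.ofReal_mul (le_of_lt hδA)] at h2
        have h3 : δA * L ≤ -(g j (xPart zstar)) :=
          (ENNReal.ofReal_le_ofReal_iff (by linarith)).mp h2
        have h4 : L * t0 < L * δA := mul_lt_mul_of_pos_left hlt hLpos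
        rw [mul_comm] at h3
        linarith
  · exact hzB j hjzero
end
end

section
/- Suppose z* = (x*, y*) satisfies f(x*) − h(y*) ≤ 0, G(x*) ≤ 0 componentwise and y* ≥ 0 componentwise, that g_j(x*) < 0 for every j ∈ N and y*_j > 0 for every j ∈ B_a, that the radius of active-set stability δ_G is finite, and that B = {1, …, q}. Then S*_L = {(x, (w, 0)) : (x, w) ∈ S*_B}, where (w, 0) ∈ ℝᵐ is the vector whose first q coordinates are w and whose remaining coordinates (indexed by N) are zero; that is, (x, y) ∈ S*_L if and only if y_j = 0 for every j ∈ N and the pair (x, (y₁, …, y_q)) lies in S*_B. -/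
noncomputable section

open scoped ENNReal
open Classical Filter Topology

/-- The dual function of the reduced problem using only the first `q` constraints. -/
def hdualB {n m : ℕ} (f : (Fin n → ℝ) → ℝ) (g : Fin m → (Fin n → ℝ) → ℝ)
    (q : ℕ) (hq : q ≤ m) (w : Fin q → ℝ) : EReal :=
  ⨅ x : Fin n → ℝ, ((f x + ∑ j : Fin q, w j * g (Fin.castLE hq j) x : ℝ) : EReal)

/-- The primal-dual solution set S*_B of the reduced problem. -/
def SstarB {n m : ℕ} (f : (Fin n → ℝ) → ℝ) (g : Fin m → (Fin n → ℝ) → ℝ)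
    (q : ℕ) (hq : q ≤ m) : Set ((Fin n → ℝ) × (Fin q → ℝ)) :=
  {p | ((f p.1 : ℝ) : EReal) ≤ hdualB f g q hq p.2 ∧
    (∀ j : Fin q, g (Fin.castLE hq j) p.1 ≤ 0) ∧
    ∀ j : Fin q, 0 ≤ p.2 j}

lemma sum_split19 {m q : ℕ} (hq : q ≤ m) (F : Fin m → ℝ)
    (hF : ∀ j : Fin m, q ≤ (j : ℕ) → F j = 0) :
    ∑ j : Fin m, F j = ∑ j : Fin q, F (Fin.castLE hq j) := by
  classical
  have hmap : ∑ j : Fin q, F (Fin.castLE hq j) =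
      ∑ j ∈ Finset.univ.map (Fin.castLEEmb hq), F j := (Finset.sum_map Finset.univ (Fin.castLEEmb hq) F).symm
  rw [hmap]
  refine (Finset.sum_subset (Finset.subset_univ _) ?_).symm
  intro j _ hj
  refine hF j (le_of_not_gt fun h => hj ?_)
  simp only [Finset.mem_map, Finset.mem_univ, true_and, Fin.castLEEmb_apply]
  exact ⟨⟨j, h⟩, Fin.ext rfl⟩

lemma hdual_eq19 {n m : ℕ} (f : (Fin n → ℝ) → ℝ) (g : Fin m → (Fin n → ℝ) → ℝ)
    (q : ℕ) (hq : q ≤ m) (y : Fin m → ℝ) (hy : ∀ j : Fin m, q ≤ (j : ℕ) → y j = 0) :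
    hdualFn f g y = hdualB f g q hq (fun j => y (Fin.castLE hq j)) := by
  refine iInf_congr fun x => ?_
  have hs := sum_split19 hq (fun j => y j * g j x) (fun j hj => by show y j * g j x = 0; rw [hy j hj]; ring)
  exact_mod_cast congrArg (fun r : ℝ => ((r : EReal))) (by rw [hs])

/-- Proposition: S*_L is S*_B with the nonactive multipliers set to 0. -/
theorem stmt19
    (n m : ℕ) (hn : 0 < n) (hm : 0 < m)
    (f : (Fin n → ℝ) → ℝ) (g : Fin m → (Fin n → ℝ) → ℝ)
    (hf : ConvexOn ℝ Set.univ f) (hg : ∀ j, ConvexOn ℝ Set.univ (g j))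
    (P : Matrix (Fin n ⊕ Fin m) (Fin n ⊕ Fin m) ℝ) (hP : P.PosDef)
    (zstar : Zsp n m)
    -- z* is a primal-dual solution of the full problem
    (hgap : ((f (xPart zstar) : ℝ) : EReal) ≤ hdualFn f g (yPart zstar))
    (hfeas : ∀ j : Fin m, g j (xPart zstar) ≤ 0)
    (hdfeas : ∀ j : Fin m, 0 ≤ yPart zstar j)
    -- δ_G is finite
    (hδfin : BddAbove (stabSet g P zstar))
    -- B = {1, …, q}
    (q : ℕ) (hq : q ≤ m)
    (hB : ∀ j : Fin m, g j (xPart zstar) = 0 ↔ (j : ℕ) < q) :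
    ∀ z : Zsp n m,
      z ∈ SstarL f g zstar ↔
        ((∀ j : Fin m, q ≤ (j : ℕ) → yPart z j = 0) ∧
          (xPart z, fun j : Fin q => yPart z (Fin.castLE hq j)) ∈
            SstarB f g q hq) := by
  intro z
  set x := xPart z with hx
  set y := yPart z with hy
  set xs := xPart zstar with hxs
  set ys := yPart zstar with hys
  -- g j xs < 0 for nonactive j
  have hneg : ∀ j : Fin m, q ≤ (j : ℕ) → g j xs < 0 := fun j hj =>
    lt_of_le_of_ne (hfeas j) (fun e => absurd ((hB j).mp e) (by omega))
  -- extraction of real inequalities from hgap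
  have keystar : ∀ x', f xs ≤ f x' + ∑ j, ys j * g j x' := fun x' => by
    have := le_trans hgap (iInf_le _ x')
    exact_mod_cast this
  -- Step A : ys j = 0 for nonactive j
  have hysz : ∀ j : Fin m, q ≤ (j : ℕ) → ys j = 0 := by
    have h0 : 0 ≤ ∑ j, ys j * g j xs := by linarith [keystar xs]
    have hnp : ∀ j ∈ Finset.univ, ys j * g j xs ≤ 0 := fun j _ =>
      mul_nonpos_of_nonneg_of_nonpos (hdfeas j) (hfeas j)
    have hsum0 : ∑ j, ys j * g j xs = 0 :=
      le_antisymm (Finset.sum_nonpos hnp) h0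
    intro j hj
    have := (Finset.sum_eq_zero_iff_of_nonpos hnp).mp hsum0 j (Finset.mem_univ j)
    rcases mul_eq_zero.mp this with h | h
    · exact h
    · exact absurd h (ne_of_lt (hneg j hj))
  constructor
  · rintro ⟨h1, h2, h3⟩
    have key : ∀ x', f x ≤ f x' + ∑ j, y j * g j x' := fun x' => by
      have := le_trans h1 (iInf_le _ x')
      exact_mod_cast this
    -- Step B : f xs ≤ f x
    have hBle : f xs ≤ f x := by
      have hnp : ∑ j, ys j * g j x ≤ 0 := by
        refine Finset.sum_nonpos fun j _ => ?_
        by_cases hj : (j : ℕ) < q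
        · exact mul_nonpos_of_nonneg_of_nonpos (hdfeas j) (h2 j ((hB j).mpr hj))
        · rw [hysz j (le_of_not_gt hj)]; ring_nf; exact le_refl 0
      linarith [keystar x]
    -- Step C : y j = 0 for nonactive j
    have hyz : ∀ j : Fin m, q ≤ (j : ℕ) → y j = 0 := by
      have hnp : ∀ j ∈ Finset.univ, y j * g j xs ≤ 0 := fun j _ =>
        mul_nonpos_of_nonneg_of_nonpos (h3 j) (hfeas j)
      have h0 : 0 ≤ ∑ j, y j * g j xs := by linarith [key xs]
      have hsum0 : ∑ j, y j * g j xs = 0 :=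
        le_antisymm (Finset.sum_nonpos hnp) h0
      intro j hj
      have := (Finset.sum_eq_zero_iff_of_nonpos hnp).mp hsum0 j (Finset.mem_univ j)
      rcases mul_eq_zero.mp this with h | h
      · exact h
      · exact absurd h (ne_of_lt (hneg j hj))
    refine ⟨hyz, ?_, ?_, ?_⟩
    · rw [← hdual_eq19 f g q hq y hyz]; exact h1
    · intro j
      exact h2 _ ((hB _).mpr (by simp only [Fin.coe_castLE]; exact j.isLt))
    · intro j; exact h3 _
  · rintro ⟨hyz, hb1, hb2, hb3⟩
    refine ⟨?_, ?_, ?_⟩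
    · rw [hdual_eq19 f g q hq y hyz]; exact hb1
    · intro j hj
      have hjq : (j : ℕ) < q := (hB j).mp hj
      exact hb2 ⟨(j : ℕ), hjq⟩
    · intro j
      by_cases hjq : (j : ℕ) < q
      · exact hb3 ⟨(j : ℕ), hjq⟩
      · show (0:ℝ) ≤ y j
        rw [hyz j (le_of_not_gt hjq)]
end
end
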